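/- arXiv:2211.04554 — 3 statements merged into one kernel-verified Lean document; each statement's English description precedes it below -/
import Mathlib

section
/- Let Γ be a countable group, μ a finitely supported generating probability measure on Γ, and ν a μ-stationary probability measure for a measurable Γ-action on a standard probability space (X, 𝔪). Let A_1 ⊆ A_2 ⊆ ⋯ be an increasing sequence of Γ-invariant sub-σ-algebras of 𝔪 and let A_∞ = σ(⋃_{i} A_i) be the σ-algebra they generate. Then the Furstenberg entropies satisfy h_μ(A_∞) = lim_{i→∞} h_μ(A_i) = sup_i h_μ(A_i). -/
open MeasureTheory Filter Topology
open scoped ENNReal NNReal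

/-- Convolution powers of a probability measure on a discrete group:
`convPow μ 0 = δ_e` and `convPow μ (n+1) {g} = ∑_h μ {h} * convPow μ n {h⁻¹ g}`. -/
noncomputable def convPow {Γ : Type*} [Group Γ] [MeasurableSpace Γ]
    (μ : Measure Γ) : ℕ → Measure Γ
  | 0 => Measure.dirac 1
  | n + 1 => (μ.prod (convPow μ n)).map (fun p => p.1 * p.2)

/-- The Furstenberg entropy of the stationary measure `ν` relative to a (`Γ`-invariant)
sub-σ-algebra `A` of the ambient σ-algebra `mX`:
`h_μ(A) = ∑_{g∈Γ} μ({g}) ∫_X −log( d(((g⁻¹)_*ν)|_A)/d(ν|_A)(x) ) dν(x)`. -/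
noncomputable def furstenbergEntropy {Γ X : Type*} [Group Γ] [MeasurableSpace Γ]
    [SMul Γ X] (A : MeasurableSpace X) {mX : MeasurableSpace X} (hA : A ≤ mX)
    (μ : Measure Γ) (ν : Measure X) : ℝ :=
  ∑' g : Γ, (μ {g}).toReal *
    ∫ x, -Real.log
        ((@Measure.rnDeriv X A ((ν.map fun y => g⁻¹ • y).trim hA) (ν.trim hA) x).toReal) ∂ν

section Core
variable {X : Type*} [mX : MeasurableSpace X]

lemma trim_le_smul_trim {B : MeasurableSpace X} (hB : B ≤ mX) {ν κ : @Measure X mX} {c : ℝ≥0∞}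
    (h : κ ≤ c • ν) : κ.trim hB ≤ c • ν.trim hB := by
  rw [Measure.le_iff]
  intro s hs
  rw [trim_measurableSet_eq hB hs, Measure.smul_apply, trim_measurableSet_eq hB hs]
  exact Measure.le_iff.1 h s (hB s hs)

lemma smul_trim_le_trim {B : MeasurableSpace X} (hB : B ≤ mX) {ν κ : @Measure X mX} {c : ℝ≥0∞}
    (h : c • ν ≤ κ) : c • ν.trim hB ≤ κ.trim hB := by
  rw [Measure.le_iff]
  intro s hs
  rw [trim_measurableSet_eq hB hs, Measure.smul_apply, trim_measurableSet_eq hB hs]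
  exact Measure.le_iff.1 h s (hB s hs)

lemma rnDeriv_trim_props {B : MeasurableSpace X} (hB : B ≤ mX)
    (ν κ : @Measure X mX) [IsProbabilityMeasure ν] [IsProbabilityMeasure κ]
    {c₁ c₂ : ℝ≥0∞} (hc₁0 : c₁ ≠ 0) (hc₁t : c₁ ≠ ∞) (hc₂t : c₂ ≠ ∞)
    (h₁ : c₁ • ν ≤ κ) (h₂ : κ ≤ c₂ • ν) :
    (∀ᵐ x ∂ν, c₁.toReal ≤ ((κ.trim hB).rnDeriv (ν.trim hB) x).toReal
        ∧ ((κ.trim hB).rnDeriv (ν.trim hB) x).toReal ≤ c₂.toReal)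
      ∧ ∀ s : Set X, MeasurableSet[B] s →
        ∫ x in s, ((κ.trim hB).rnDeriv (ν.trim hB) x).toReal ∂ν = (κ s).toReal := by
  set ρ := (κ.trim hB).rnDeriv (ν.trim hB) with hρ
  have hle : κ.trim hB ≤ c₂ • ν.trim hB := trim_le_smul_trim (mX := mX) hB h₂
  have hge : c₁ • ν.trim hB ≤ κ.trim hB := smul_trim_le_trim (mX := mX) hB h₁
  have hac : κ.trim hB ≪ ν.trim hB :=
    (Measure.absolutelyContinuous_of_le hle).trans Measure.smul_absolutelyContinuous
  have hset : ∀ s : Set X, MeasurableSet[B] s → ∫⁻ x in s, ρ x ∂(ν.trim hB) = κ s := by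
    intro s hs
    rw [Measure.setLIntegral_rnDeriv' hac hs, trim_measurableSet_eq hB hs]
  -- upper bound a.e. (w.r.t. the trimmed measure)
  have hub : ρ ≤ᵐ[ν.trim hB] fun _ => c₂ := by
    refine ae_le_of_forall_setLIntegral_le_of_sigmaFinite (Measure.measurable_rnDeriv _ _)
      fun s hs _ => ?_
    rw [hset s hs, setLIntegral_const, trim_measurableSet_eq hB hs]
    exact le_trans (Measure.le_iff.1 h₂ s (hB s hs)) (le_of_eq (by simp [mul_comm]))
  have hlb : (fun _ => c₁) ≤ᵐ[ν.trim hB] ρ := by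
    refine ae_le_of_forall_setLIntegral_le_of_sigmaFinite measurable_const fun s hs _ => ?_
    rw [hset s hs, setLIntegral_const, trim_measurableSet_eq hB hs]
    exact le_trans (le_of_eq (by simp [mul_comm])) (Measure.le_iff.1 h₁ s (hB s hs))
  have hub' : ∀ᵐ x ∂ν, ρ x ≤ c₂ := ae_le_of_ae_le_trim hub
  have hlb' : ∀ᵐ x ∂ν, c₁ ≤ ρ x := ae_le_of_ae_le_trim hlb
  have hbdd : ∀ᵐ x ∂ν, c₁.toReal ≤ (ρ x).toReal ∧ (ρ x).toReal ≤ c₂.toReal := by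
    filter_upwards [hub', hlb'] with x hx hx'
    have hxt : ρ x ≠ ∞ := ne_top_of_le_ne_top hc₂t hx
    exact ⟨ENNReal.toReal_mono hxt hx', ENNReal.toReal_mono hc₂t hx⟩
  refine ⟨hbdd, fun s hs => ?_⟩
  have hmρ : Measurable[mX] ρ := (Measure.measurable_rnDeriv _ _).mono hB le_rfl
  have h1 : ∫ x in s, (ρ x).toReal ∂ν = (∫⁻ x in s, ρ x ∂ν).toReal := by
    refine integral_toReal hmρ.aemeasurable (ae_restrict_of_ae ?_)
    filter_upwards [hub'] with x hx using lt_of_le_of_lt hx hc₂t.lt_top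
  have h2 : ∫⁻ x in s, ρ x ∂ν = κ s := by
    have hmB : Measurable[B] ρ := Measure.measurable_rnDeriv _ _
    rw [← hset s hs, restrict_trim hB ν hs, lintegral_trim hB hmB]
  rw [h1, h2]

end Core

lemma entropy_core (A : ℕ → MeasurableSpace X) (hmono : Monotone A) (hAm : ∀ i, A i ≤ mX)
    (ν κ : @Measure X mX) [IsProbabilityMeasure ν] [IsProbabilityMeasure κ]
    {c₁ c₂ : ℝ≥0∞} (hc₁0 : c₁ ≠ 0) (hc₁t : c₁ ≠ ∞) (hc₂0 : c₂ ≠ 0) (hc₂t : c₂ ≠ ∞)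
    (h₁ : c₁ • ν ≤ κ) (h₂ : κ ≤ c₂ • ν) :
    Tendsto (fun i => ∫ x, -Real.log (((κ.trim (hAm i)).rnDeriv (ν.trim (hAm i)) x).toReal) ∂ν)
        atTop
        (𝓝 (∫ x, -Real.log (((κ.trim (iSup_le hAm)).rnDeriv (ν.trim (iSup_le hAm)) x).toReal) ∂ν))
      ∧ ∀ i, (∫ x, -Real.log (((κ.trim (hAm i)).rnDeriv (ν.trim (hAm i)) x).toReal) ∂ν)
          ≤ ∫ x, -Real.log (((κ.trim (iSup_le hAm)).rnDeriv (ν.trim (iSup_le hAm)) x).toReal) ∂ν := by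
  have hmT : (⨆ i, A i) ≤ mX := iSup_le hAm
  set r : ℕ → X → ℝ := fun i x => ((κ.trim (hAm i)).rnDeriv (ν.trim (hAm i)) x).toReal with hr
  set rT : X → ℝ := fun x => ((κ.trim (iSup_le hAm)).rnDeriv (ν.trim (iSup_le hAm)) x).toReal
    with hrT
  have props : ∀ i, _ := fun i =>
    rnDeriv_trim_props (mX := mX) (hAm i) ν κ hc₁0 hc₁t hc₂t h₁ h₂
  have propsT := rnDeriv_trim_props (mX := mX) (iSup_le hAm) ν κ hc₁0 hc₁t hc₂t h₁ h₂
  have hc₁R : 0 < c₁.toReal := ENNReal.toReal_pos hc₁0 hc₁t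
  have smi : ∀ i, StronglyMeasurable[A i] (r i) := fun i =>
    (Measurable.ennreal_toReal (Measure.measurable_rnDeriv _ _)).stronglyMeasurable
  have smT : StronglyMeasurable[⨆ i, A i] rT :=
    (Measurable.ennreal_toReal (Measure.measurable_rnDeriv _ _)).stronglyMeasurable
  have hmi : ∀ i, Measurable[mX] (r i) := fun i => ((smi i).mono (hAm i)).measurable
  have hmTmeas : Measurable[mX] rT := (smT.mono (iSup_le hAm)).measurable
  have hint_i : ∀ i, Integrable (r i) ν := fun i =>
    (integrable_const c₂.toReal).mono' (hmi i).aestronglyMeasurable (by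
      filter_upwards [(props i).1] with x hx
      rw [Real.norm_eq_abs, abs_of_nonneg ENNReal.toReal_nonneg]
      exact hx.2)
  have hintT : Integrable rT ν :=
    (integrable_const c₂.toReal).mono' hmTmeas.aestronglyMeasurable (by
      filter_upwards [propsT.1] with x hx
      rw [Real.norm_eq_abs, abs_of_nonneg ENNReal.toReal_nonneg]
      exact hx.2)
  -- identification with conditional expectations
  have hce : ∀ i, r i =ᵐ[ν] ν[rT | A i] := fun i => by
    refine ae_eq_condExp_of_forall_setIntegral_eq (hAm i) hintT
      (fun s _ _ => (hint_i i).integrableOn) (fun s hs _ => ?_)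
      ((smi i).aestronglyMeasurable)
    rw [(props i).2 s hs, propsT.2 s ((le_iSup A i) s hs)]
  have hceT : ν[rT | ⨆ i, A i] = rT := condExp_of_stronglyMeasurable (iSup_le hAm) smT hintT
  -- Lévy upward convergence
  let ℱ : Filtration ℕ mX := ⟨A, hmono, hAm⟩
  have hsm' : StronglyMeasurable[⨆ n, ℱ n] rT := smT
  have hlevy := hintT.tendsto_ae_condExp hsm'
  have haet : ∀ᵐ x ∂ν, Tendsto (fun i => r i x) atTop (𝓝 (rT x)) := by
    have hall : ∀ᵐ x ∂ν, ∀ i, r i x = (ν[rT | A i]) x := ae_all_iff.2 fun i => hce i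
    filter_upwards [hlevy, hall] with x hx hx'
    exact Tendsto.congr (fun i => (hx' i).symm) hx
  set C := max |Real.log c₁.toReal| |Real.log c₂.toReal| with hC
  have hlogbd : ∀ y : ℝ, c₁.toReal ≤ y → y ≤ c₂.toReal → ‖-Real.log y‖ ≤ C := by
    intro y h1 h2
    have hy : 0 < y := lt_of_lt_of_le hc₁R h1
    have l1 : Real.log c₁.toReal ≤ Real.log y := (Real.log_le_log_iff hc₁R hy).2 h1
    have l2 : Real.log y ≤ Real.log c₂.toReal :=
      (Real.log_le_log_iff hy (lt_of_lt_of_le hy h2)).2 h2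
    rw [norm_neg, Real.norm_eq_abs, abs_le]
    constructor
    · have := neg_abs_le (Real.log c₁.toReal)
      have h3 : |Real.log c₁.toReal| ≤ C := le_max_left _ _
      linarith
    · have := le_abs_self (Real.log c₂.toReal)
      have h3 : |Real.log c₂.toReal| ≤ C := le_max_right _ _
      linarith
  have htend : Tendsto (fun i => ∫ x, -Real.log (r i x) ∂ν) atTop
      (𝓝 (∫ x, -Real.log (rT x) ∂ν)) := by
    refine tendsto_integral_of_dominated_convergence (fun _ => C)
      (fun i => ((Real.measurable_log.comp (hmi i)).neg).aestronglyMeasurable)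
      (integrable_const C) (fun i => ?_) ?_
    · filter_upwards [(props i).1] with x hx
      exact hlogbd _ hx.1 hx.2
    · filter_upwards [haet, propsT.1] with x hx hx'
      have hpos : 0 < rT x := lt_of_lt_of_le hc₁R hx'.1
      exact ((Real.continuousAt_log hpos.ne').tendsto.comp hx).neg
  have hineq : ∀ i, (∫ x, -Real.log (r i x) ∂ν) ≤ ∫ x, -Real.log (rT x) ∂ν := by
    intro i
    set q : X → ℝ := (fun x => (r i x)⁻¹) * rT with hq
    have hqint : Integrable q ν := by
      refine (integrable_const (c₁.toReal⁻¹ * c₂.toReal)).mono'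
        (((hmi i).inv.mul hmTmeas).aestronglyMeasurable) ?_
      filter_upwards [(props i).1, propsT.1] with x hx hx'
      have hpos_i : 0 < r i x := lt_of_lt_of_le hc₁R hx.1
      have h1 : (r i x)⁻¹ ≤ c₁.toReal⁻¹ := inv_anti₀ hc₁R hx.1
      have h0 : (0:ℝ) ≤ (r i x)⁻¹ := inv_nonneg.2 hpos_i.le
      have hqx : q x = (r i x)⁻¹ * rT x := rfl
      rw [Real.norm_eq_abs, hqx, abs_of_nonneg (mul_nonneg h0 ENNReal.toReal_nonneg)]
      exact mul_le_mul h1 hx'.2 ENNReal.toReal_nonneg (inv_nonneg.2 hc₁R.le)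
    have hcond : ν[q | A i] =ᵐ[ν] (fun x => (r i x)⁻¹) * ν[rT | A i] :=
      condExp_mul_of_stronglyMeasurable_left ((smi i).measurable.inv).stronglyMeasurable hqint hintT
    have h1 : ∫ x, q x ∂ν = 1 := by
      have h2 : ∫ x, (ν[q | A i]) x ∂ν = ∫ x, q x ∂ν := integral_condExp (hAm i)
      have h3 : ν[q | A i] =ᵐ[ν] fun _ => (1:ℝ) := by
        refine hcond.trans ?_
        filter_upwards [hce i, (props i).1] with x hx hx'
        have hpos_i : 0 < r i x := lt_of_lt_of_le hc₁R hx'.1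
        show (r i x)⁻¹ * (ν[rT | A i]) x = 1
        rw [← hx]
        exact inv_mul_cancel₀ hpos_i.ne'
      rw [← h2, integral_congr_ae h3]
      simp
    have hlogint_i : Integrable (fun x => Real.log (r i x)) ν := by
      refine (integrable_const C).mono'
        ((Real.measurable_log.comp (hmi i)).aestronglyMeasurable) ?_
      filter_upwards [(props i).1] with x hx
      have := hlogbd _ hx.1 hx.2
      rwa [norm_neg] at this
    have hlogintT : Integrable (fun x => Real.log (rT x)) ν := by
      refine (integrable_const C).mono'
        ((Real.measurable_log.comp hmTmeas).aestronglyMeasurable) ?_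
      filter_upwards [propsT.1] with x hx
      have := hlogbd _ hx.1 hx.2
      rwa [norm_neg] at this
    have hptwise : ∀ᵐ x ∂ν, Real.log (rT x) - Real.log (r i x) ≤ q x - 1 := by
      filter_upwards [(props i).1, propsT.1] with x hx hx'
      have hpos_i : 0 < r i x := lt_of_lt_of_le hc₁R hx.1
      have hposT : 0 < rT x := lt_of_lt_of_le hc₁R hx'.1
      have e1 : Real.log (rT x) - Real.log (r i x) = Real.log (rT x / r i x) :=
        (Real.log_div hposT.ne' hpos_i.ne').symm
      rw [e1]
      have e2 := Real.log_le_sub_one_of_pos (div_pos hposT hpos_i)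
      have e3 : rT x / r i x = q x := div_eq_inv_mul _ _
      exact e2.trans_eq (by rw [e3])
    have hmono2 : ∫ x, (Real.log (rT x) - Real.log (r i x)) ∂ν ≤ ∫ x, (q x - 1) ∂ν :=
      integral_mono_ae (hlogintT.sub hlogint_i) (hqint.sub (integrable_const 1)) hptwise
    rw [integral_sub hlogintT hlogint_i, integral_sub hqint (integrable_const 1), h1] at hmono2
    simp only [integral_const, measure_univ, probReal_univ, ENNReal.toReal_one, one_smul, sub_self] at hmono2
    have e4 : ∫ x, -Real.log (r i x) ∂ν = -∫ x, Real.log (r i x) ∂ν := integral_neg _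
    have e5 : ∫ x, -Real.log (rT x) ∂ν = -∫ x, Real.log (rT x) ∂ν := integral_neg _
    rw [e4, e5]
    linarith
  exact ⟨htend, hineq⟩


section Group
variable {Γ : Type*} [Group Γ] [Countable Γ] [MeasurableSpace Γ] [MeasurableSingletonClass Γ]

lemma convPow_isProbabilityMeasure (μ : Measure Γ) [IsProbabilityMeasure μ] :
    ∀ n, IsProbabilityMeasure (convPow μ n)
  | 0 => by rw [convPow]; infer_instance
  | n + 1 => by
      haveI := convPow_isProbabilityMeasure μ n
      rw [convPow]
      exact Measure.isProbabilityMeasure_map (measurable_of_countable _).aemeasurable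

lemma convPow_succ_singleton (μ : Measure Γ) [IsProbabilityMeasure μ] (n : ℕ) (g : Γ) :
    convPow μ (n + 1) {g} = ∑' h : Γ, μ {h} * convPow μ n {h⁻¹ * g} := by
  haveI := convPow_isProbabilityMeasure μ n
  rw [convPow, Measure.map_apply (measurable_of_countable _) (measurableSet_singleton g),
    Measure.prod_apply ((measurable_of_countable _) (measurableSet_singleton g))]
  have hpre : ∀ a : Γ, (Prod.mk a ⁻¹' ((fun p : Γ × Γ => p.1 * p.2) ⁻¹' {g})) = {a⁻¹ * g} := by
    intro a; ext b
    simp [eq_inv_mul_iff_mul_eq]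
  simp_rw [hpre]
  rw [lintegral_countable']
  exact tsum_congr fun a => mul_comm _ _

lemma convPow_stationary {X : Type*} [mX : MeasurableSpace X] [MulAction Γ X]
    (hmeas : ∀ g : Γ, Measurable fun x : X => g • x)
    (μ : Measure Γ) [IsProbabilityMeasure μ] (ν : Measure X)
    (hstat : Measure.sum (fun g : Γ => μ {g} • ν.map (fun x => g • x)) = ν) :
    ∀ n, Measure.sum (fun g : Γ => convPow μ n {g} • ν.map (fun x => g • x)) = ν := by
  have happ : ∀ (ξ : Γ → ℝ≥0∞) (s : Set X), MeasurableSet s →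
      Measure.sum (fun g : Γ => ξ g • ν.map (fun x => g • x)) s
        = ∑' g : Γ, ξ g * ν ((fun x => g • x) ⁻¹' s) := by
    intro ξ s hs
    rw [Measure.sum_apply _ hs]
    exact tsum_congr fun g => by
      rw [Measure.smul_apply, Measure.map_apply (hmeas g) hs, smul_eq_mul]
  have key : ∀ n (s : Set X), MeasurableSet s →
      ∑' g : Γ, convPow μ n {g} * ν ((fun x => g • x) ⁻¹' s) = ν s := by
    intro n
    induction n with
    | zero =>
      intro s hs
      rw [tsum_eq_single 1]
      · have h1 : (fun x : X => (1 : Γ) • x) = id := funext fun x => one_smul Γ x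
        simp [convPow, h1]
      · intro g hg
        have : (Measure.dirac (1 : Γ)) {g} = 0 := by
          rw [Measure.dirac_apply]
          simp [Set.indicator, hg.symm]
        rw [convPow, this, zero_mul]
    | succ n ih =>
      intro s hs
      have hconv := convPow_succ_singleton μ n
      calc ∑' g : Γ, convPow μ (n + 1) {g} * ν ((fun x => g • x) ⁻¹' s)
          = ∑' g : Γ, ∑' h : Γ, μ {h} * convPow μ n {h⁻¹ * g} * ν ((fun x => g • x) ⁻¹' s) := by
            refine tsum_congr fun g => ?_
            rw [hconv g, ENNReal.tsum_mul_right]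
        _ = ∑' h : Γ, ∑' g : Γ, μ {h} * convPow μ n {h⁻¹ * g} * ν ((fun x => g • x) ⁻¹' s) :=
            ENNReal.tsum_comm
        _ = ∑' h : Γ, ∑' b : Γ, μ {h} * convPow μ n {b} * ν ((fun x => b • x) ⁻¹' ((fun x => h • x) ⁻¹' s)) := by
            refine tsum_congr fun h => ?_
            rw [← (Equiv.mulLeft h).tsum_eq]
            refine tsum_congr fun b => ?_
            have h1 : (h * b)⁻¹ * (h * b) = b * b⁻¹ := by group
            have h2 : ((fun x : X => (h * b) • x) ⁻¹' s) = (fun x => b • x) ⁻¹' ((fun x => h • x) ⁻¹' s) := by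
              ext x; simp [mul_smul]
            simp only [Equiv.coe_mulLeft, inv_mul_cancel_left, h2]
        _ = ∑' h : Γ, μ {h} * ν ((fun x => h • x) ⁻¹' s) := by
            refine tsum_congr fun h => ?_
            rw [← ih ((fun x => h • x) ⁻¹' s) ((hmeas h) hs), ← ENNReal.tsum_mul_left]
            exact tsum_congr fun b => mul_assoc _ _ _
        _ = ν s := by rw [← happ _ s hs, hstat]
  intro n
  ext s hs
  rw [happ _ s hs, key n s hs]

lemma exists_smul_le_of_stationary {X : Type*} [mX : MeasurableSpace X] [MulAction Γ X]
    (hmeas : ∀ g : Γ, Measurable fun x : X => g • x)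
    (μ : Measure Γ) [IsProbabilityMeasure μ]
    (hgen : ∀ g : Γ, ∃ n : ℕ, convPow μ n {g} ≠ 0)
    (ν : Measure X) [IsProbabilityMeasure ν]
    (hstat : Measure.sum (fun g : Γ => μ {g} • ν.map (fun x => g • x)) = ν) (g : Γ) :
    ∃ c : ℝ≥0∞, c ≠ 0 ∧ c ≠ ∞ ∧ c • ν.map (fun x => g • x) ≤ ν := by
  obtain ⟨n, hn⟩ := hgen g
  haveI := convPow_isProbabilityMeasure μ n
  refine ⟨convPow μ n {g}, hn, (measure_ne_top _ _), ?_⟩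
  conv_rhs => rw [← convPow_stationary hmeas μ ν hstat n]
  rw [Measure.le_iff]
  intro s hs
  rw [Measure.sum_apply _ hs]
  exact ENNReal.le_tsum g

lemma exists_bounds_of_stationary {X : Type*} [mX : MeasurableSpace X] [MulAction Γ X]
    (hmeas : ∀ g : Γ, Measurable fun x : X => g • x)
    (μ : Measure Γ) [IsProbabilityMeasure μ]
    (hgen : ∀ g : Γ, ∃ n : ℕ, convPow μ n {g} ≠ 0)
    (ν : Measure X) [IsProbabilityMeasure ν]
    (hstat : Measure.sum (fun g : Γ => μ {g} • ν.map (fun x => g • x)) = ν) (g : Γ) :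
    ∃ c₁ c₂ : ℝ≥0∞, c₁ ≠ 0 ∧ c₁ ≠ ∞ ∧ c₂ ≠ 0 ∧ c₂ ≠ ∞ ∧
      c₁ • ν ≤ ν.map (fun x => g • x) ∧ ν.map (fun x => g • x) ≤ c₂ • ν := by
  obtain ⟨c, hc0, hct, hc⟩ := exists_smul_le_of_stationary hmeas μ hgen ν hstat g
  obtain ⟨c', hc'0, hc't, hc'⟩ := exists_smul_le_of_stationary hmeas μ hgen ν hstat g⁻¹
  refine ⟨c', c⁻¹, hc'0, hc't, by simp [hct], by simp [hc0], ?_, ?_⟩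
  · -- push  c' • (g⁻¹)_*ν ≤ ν  forward by g
    have := Measure.map_mono hc' (hmeas g)
    rw [Measure.map_smul, Measure.map_map (hmeas g) (hmeas g⁻¹)] at this
    have hcomp : ((fun x : X => g • x) ∘ fun x => g⁻¹ • x) = id :=
      funext fun x => by simp [smul_smul]
    rwa [hcomp, Measure.map_id] at this
  · -- from c • (g)_*ν ≤ ν
    rw [Measure.le_iff]
    intro s hs
    have := Measure.le_iff.1 hc s hs
    rw [Measure.smul_apply, smul_eq_mul] at this ⊢
    rw [← ENNReal.div_eq_inv_mul, ENNReal.le_div_iff_mul_le (Or.inl hc0) (Or.inl hct), mul_comm]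
    exact this
end Group


/-- Let `Γ` be a countable group, `μ` a finitely supported generating probability measure
on `Γ`, and `ν` a `μ`-stationary probability measure for a measurable `Γ`-action on a
standard probability space `(X, 𝔪)`.  Let `A 1 ⊆ A 2 ⊆ ⋯` be an increasing sequence of
`Γ`-invariant sub-σ-algebras of `𝔪` and let `A_∞ = ⨆ i, A i` be the σ-algebra they
generate.  Then `h_μ(A_∞) = lim_i h_μ(A i) = sup_i h_μ(A i)`. -/
theorem furstenbergEntropy_iSup
    {Γ : Type*} [Group Γ] [Countable Γ] [MeasurableSpace Γ] [MeasurableSingletonClass Γ]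
    {X : Type*} (A : ℕ → MeasurableSpace X) [mX : MeasurableSpace X] [StandardBorelSpace X]
    [MulAction Γ X] (hmeas : ∀ g : Γ, Measurable (fun x : X => g • x))
    (μ : Measure Γ) [IsProbabilityMeasure μ]
    (hfin : {g : Γ | μ {g} ≠ 0}.Finite)
    (hgen : ∀ g : Γ, ∃ n : ℕ, convPow μ n {g} ≠ 0)
    (ν : Measure X) [IsProbabilityMeasure ν]
    (hstat : Measure.sum (fun g : Γ => μ {g} • ν.map (fun x => g • x)) = ν)
    (hmono : Monotone A) (hAm : ∀ i, A i ≤ mX)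
    (hAinv : ∀ (i : ℕ) (g : Γ) (s : Set X),
      MeasurableSet[A i] s → MeasurableSet[A i] ((fun x => g • x) ⁻¹' s)) :
    Tendsto (fun i => furstenbergEntropy (A i) (hAm i) μ ν) atTop
        (𝓝 (furstenbergEntropy (⨆ i, A i) (iSup_le hAm) μ ν)) ∧
      furstenbergEntropy (⨆ i, A i) (iSup_le hAm) μ ν =
        ⨆ i, furstenbergEntropy (A i) (hAm i) μ ν := by
  classical
  have hκ : ∀ g : Γ, IsProbabilityMeasure (ν.map fun y => g⁻¹ • y) := fun g =>
    Measure.isProbabilityMeasure_map (hmeas g⁻¹).aemeasurable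
  have core : ∀ g : Γ,
      Tendsto (fun i => ∫ x, -Real.log
          ((@Measure.rnDeriv X (A i) ((ν.map fun y => g⁻¹ • y).trim (hAm i))
            (ν.trim (hAm i)) x).toReal) ∂ν) atTop
        (𝓝 (∫ x, -Real.log
          ((@Measure.rnDeriv X (⨆ i, A i) ((ν.map fun y => g⁻¹ • y).trim (iSup_le hAm))
            (ν.trim (iSup_le hAm)) x).toReal) ∂ν))
      ∧ ∀ i, (∫ x, -Real.log
          ((@Measure.rnDeriv X (A i) ((ν.map fun y => g⁻¹ • y).trim (hAm i))
            (ν.trim (hAm i)) x).toReal) ∂ν)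
          ≤ ∫ x, -Real.log
          ((@Measure.rnDeriv X (⨆ i, A i) ((ν.map fun y => g⁻¹ • y).trim (iSup_le hAm))
            (ν.trim (iSup_le hAm)) x).toReal) ∂ν := by
    intro g
    obtain ⟨c₁, c₂, h10, h1t, h20, h2t, hb1, hb2⟩ :=
      exists_bounds_of_stationary hmeas μ hgen ν hstat g⁻¹
    haveI := hκ g
    exact entropy_core A hmono hAm ν (ν.map fun y => g⁻¹ • y) h10 h1t h20 h2t hb1 hb2
  set T := hfin.toFinset with hT
  have hzero : ∀ g ∉ T, μ {g} = 0 := by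
    intro g hg
    by_contra hne
    exact hg (hfin.mem_toFinset.2 hne)
  have hrwi : ∀ i, furstenbergEntropy (A i) (hAm i) μ ν = ∑ g ∈ T, (μ {g}).toReal *
      ∫ x, -Real.log
        ((@Measure.rnDeriv X (A i) ((ν.map fun y => g⁻¹ • y).trim (hAm i))
          (ν.trim (hAm i)) x).toReal) ∂ν := by
    intro i
    refine tsum_eq_sum fun g hg => ?_
    rw [hzero g hg]
    simp
  have hrwT : furstenbergEntropy (⨆ i, A i) (iSup_le hAm) μ ν = ∑ g ∈ T, (μ {g}).toReal *
      ∫ x, -Real.log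
        ((@Measure.rnDeriv X (⨆ i, A i) ((ν.map fun y => g⁻¹ • y).trim (iSup_le hAm))
          (ν.trim (iSup_le hAm)) x).toReal) ∂ν := by
    refine tsum_eq_sum fun g hg => ?_
    rw [hzero g hg]
    simp
  have htends : Tendsto (fun i => furstenbergEntropy (A i) (hAm i) μ ν) atTop
      (𝓝 (furstenbergEntropy (⨆ i, A i) (iSup_le hAm) μ ν)) := by
    have h1 : (fun i => furstenbergEntropy (A i) (hAm i) μ ν)
        = fun i => ∑ g ∈ T, (μ {g}).toReal *
            ∫ x, -Real.log
              ((@Measure.rnDeriv X (A i) ((ν.map fun y => g⁻¹ • y).trim (hAm i))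
                (ν.trim (hAm i)) x).toReal) ∂ν := funext fun i => hrwi i
    rw [h1, hrwT]
    exact tendsto_finset_sum _ fun g _ => ((core g).1.const_mul _)
  have hle : ∀ i, furstenbergEntropy (A i) (hAm i) μ ν
      ≤ furstenbergEntropy (⨆ i, A i) (iSup_le hAm) μ ν := by
    intro i
    rw [hrwi i, hrwT]
    exact Finset.sum_le_sum fun g _ =>
      mul_le_mul_of_nonneg_left ((core g).2 i) ENNReal.toReal_nonneg
  refine ⟨htends, le_antisymm ?_ (ciSup_le hle)⟩
  have hbdd : BddAbove (Set.range fun i => furstenbergEntropy (A i) (hAm i) μ ν) :=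
    ⟨_, Set.forall_mem_range.2 hle⟩
  exact le_of_tendsto' htends fun i => le_ciSup hbdd i
end

section
/- Let Γ be a countable group, μ a finitely supported generating probability measure on Γ, and ν a μ-stationary probability measure for a measurable Γ-action on a standard probability space (X, 𝔪). Let A_1 ⊇ A_2 ⊇ ⋯ be a decreasing sequence of Γ-invariant sub-σ-algebras of 𝔪 and let A_∞ = ⋂_{i} A_i. Then the Furstenberg entropies satisfy h_μ(A_∞) = lim_{i→∞} h_μ(A_i) = inf_i h_μ(A_i). -/
open MeasureTheory Filter Topology

lemma convPow_isProb {Γ : Type*} [Group Γ] [Countable Γ] [MeasurableSpace Γ]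
    [MeasurableSingletonClass Γ] (μ : Measure Γ) [IsProbabilityMeasure μ] (n : ℕ) :
    IsProbabilityMeasure (convPow μ n) := by
  induction n with
  | zero => exact Measure.dirac.isProbabilityMeasure
  | succ n ih =>
    haveI := ih
    exact Measure.isProbabilityMeasure_map (measurable_of_countable _).aemeasurable

lemma convPow_smul_map_le {Γ : Type*} [Group Γ] [Countable Γ] [MeasurableSpace Γ]
    [MeasurableSingletonClass Γ]
    {X : Type*} [mX : MeasurableSpace X] [MulAction Γ X]
    (hmeas : ∀ g : Γ, Measurable (fun x : X => g • x))
    (μ : Measure Γ) [IsProbabilityMeasure μ] (ν : Measure X)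
    (hstat : Measure.sum (fun g : Γ => μ {g} • ν.map (fun x => g • x)) = ν) :
    ∀ (n : ℕ) (g : Γ), convPow μ n {g} • ν.map (fun x => g • x) ≤ ν := by
  intro n
  induction n with
  | zero =>
    intro g
    by_cases hg : g = 1
    · subst hg
      have hmap : ν.map (fun x : X => (1:Γ) • x) = ν := by
        simp only [one_smul, Measure.map_id']
      have h1 : (Measure.dirac (1:Γ)) {1} = 1 := by simp
      simp only [convPow, h1, one_smul]
      simp only [one_smul] at hmap
      exact le_of_eq hmap
    · have h0 : (Measure.dirac (1:Γ)) {g} = 0 := by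
        rw [Measure.dirac_apply' _ (measurableSet_singleton g)]
        simp [Ne.symm hg]
      simp only [convPow, h0, zero_smul]
      exact Measure.zero_le ν
  | succ n ih =>
    intro g
    have hmul : Measurable (fun p : Γ × Γ => p.1 * p.2) := measurable_of_countable _
    haveI := convPow_isProb μ n
    have key : convPow μ (n+1) {g} = ∑' h : Γ, convPow μ n {h⁻¹ * g} * μ {h} := by
      rw [show convPow μ (n+1) = (μ.prod (convPow μ n)).map (fun p => p.1 * p.2) from rfl,
        Measure.map_apply hmul (measurableSet_singleton g),
        Measure.prod_apply (hmul (measurableSet_singleton g)),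
        lintegral_countable']
      congr 1
      funext h
      congr 2
      ext b
      simp [eq_inv_mul_iff_mul_eq]
    rw [Measure.le_iff]
    intro s hs
    have hν : ν s = ∑' h : Γ, μ {h} * (ν.map (fun x => h • x)) s := by
      conv_lhs => rw [← hstat]
      rw [Measure.sum_apply _ hs]
      simp only [Measure.smul_apply, smul_eq_mul]
    rw [Measure.smul_apply, smul_eq_mul, key, ← ENNReal.tsum_mul_right, hν]
    refine ENNReal.tsum_le_tsum fun h => ?_
    have hpush : convPow μ n {h⁻¹ * g} • ν.map (fun x => g • x) ≤ ν.map (fun x => h • x) := by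
      have hcomp : ((fun x : X => h • x) ∘ (fun x => (h⁻¹ * g) • x)) = fun x : X => g • x := by
        funext x
        simp [smul_smul, mul_inv_cancel_left]
      have := Measure.map_mono (ih (h⁻¹ * g)) (hmeas h)
      rwa [Measure.map_smul, Measure.map_map (hmeas h) (hmeas _), hcomp] at this
    calc convPow μ n {h⁻¹ * g} * μ {h} * ((ν.map (fun x => g • x)) s)
        = μ {h} * (convPow μ n {h⁻¹ * g} * ((ν.map (fun x => g • x)) s)) := by ring
      _ ≤ μ {h} * ((ν.map (fun x => h • x)) s) := by
          gcongr
          simpa [Measure.smul_apply, smul_eq_mul] using Measure.le_iff.1 hpush s hs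

open scoped ENNReal
section PureRN

variable {α : Type*} [MeasurableSpace α]

lemma rnDeriv_bounds (p q : Measure α) [IsFiniteMeasure q] {c C : ℝ≥0∞} (hC : C ≠ ∞)
    (h1 : c • q ≤ p) (h2 : p ≤ C • q) :
    (∀ᵐ x ∂q, c ≤ p.rnDeriv q x ∧ p.rnDeriv q x ≤ C) := by
  haveI : IsFiniteMeasure p := by
    constructor
    calc p Set.univ ≤ (C • q) Set.univ := Measure.le_iff'.1 h2 _
      _ = C * q Set.univ := by simp [Measure.smul_apply, smul_eq_mul]
      _ < ∞ := ENNReal.mul_lt_top hC.lt_top (measure_lt_top q _).ne.lt_top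
  have hac : p ≪ q := by
    refine Measure.AbsolutelyContinuous.mk fun s hs hs0 => ?_
    have := Measure.le_iff.1 h2 s hs
    rw [Measure.smul_apply, smul_eq_mul, hs0, mul_zero] at this
    exact le_antisymm this (zero_le)
  have hup : p.rnDeriv q ≤ᵐ[q] fun _ => C := by
    refine ae_le_of_forall_setLIntegral_le_of_sigmaFinite (Measure.measurable_rnDeriv p q)
      fun s hs _ => ?_
    calc ∫⁻ x in s, p.rnDeriv q x ∂q ≤ p s := Measure.setLIntegral_rnDeriv_le s
      _ ≤ (C • q) s := Measure.le_iff'.1 h2 s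
      _ = ∫⁻ _ in s, C ∂q := by simp [Measure.smul_apply, smul_eq_mul, setLIntegral_const]
  have hlow : (fun _ : α => c) ≤ᵐ[q] p.rnDeriv q := by
    refine ae_le_of_forall_setLIntegral_le_of_sigmaFinite measurable_const fun s hs _ => ?_
    calc ∫⁻ _ in s, c ∂q = (c • q) s := by simp [Measure.smul_apply, smul_eq_mul, setLIntegral_const]
      _ ≤ p s := Measure.le_iff'.1 h1 s
      _ = ∫⁻ x in s, p.rnDeriv q x ∂q := (Measure.setLIntegral_rnDeriv' hac hs).symm
  filter_upwards [hup, hlow] with x h1 h2 using ⟨h2, h1⟩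

end PureRN

section TrimRN

variable {X : Type*} {mX : MeasurableSpace X}

/-- trim inequality transfer -/
lemma trim_mono_smul {B : MeasurableSpace X} (hB : B ≤ mX) {lam ν : @Measure X mX} {c : ℝ≥0∞}
    (h : lam ≤ c • ν) : lam.trim hB ≤ c • (ν.trim hB) := by
  rw [@Measure.le_iff _ B]
  intro s hs
  rw [trim_measurableSet_eq hB hs, Measure.smul_apply, smul_eq_mul,
    trim_measurableSet_eq hB hs]
  simpa [Measure.smul_apply, smul_eq_mul] using Measure.le_iff'.1 h s

lemma smul_trim_le {B : MeasurableSpace X} (hB : B ≤ mX) {lam ν : @Measure X mX} {c : ℝ≥0∞}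
    (h : c • ν ≤ lam) : c • (ν.trim hB) ≤ lam.trim hB := by
  rw [@Measure.le_iff _ B]
  intro s hs
  rw [trim_measurableSet_eq hB hs, Measure.smul_apply, smul_eq_mul,
    trim_measurableSet_eq hB hs]
  simpa [Measure.smul_apply, smul_eq_mul] using Measure.le_iff'.1 h s

variable {B : MeasurableSpace X} (hB : B ≤ mX) (ν lam : @Measure X mX)
  [IsFiniteMeasure ν] [IsFiniteMeasure lam]

/-- the (real-valued) Radon-Nikodym derivative of the trimmed measures -/
noncomputable def rdd (hB : B ≤ mX) (ν lam : @Measure X mX) : X → ℝ :=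
  fun x => (@Measure.rnDeriv X B (lam.trim hB) (ν.trim hB) x).toReal

omit [IsFiniteMeasure ν] [IsFiniteMeasure lam] in
lemma rdd_measurable : Measurable[B] (rdd hB ν lam) :=
  (@Measure.measurable_rnDeriv X B _ _).ennreal_toReal

variable {c C : ℝ} (hc : 0 < c) (hcC : c ≤ C)
  (h1 : ENNReal.ofReal c • ν ≤ lam) (h2 : lam ≤ ENNReal.ofReal C • ν)

include h1 h2 hc hcC in
lemma rdd_bounds : ∀ᵐ x ∂ν, c ≤ rdd hB ν lam x ∧ rdd hB ν lam x ≤ C := by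
  haveI : IsFiniteMeasure (ν.trim hB) := isFiniteMeasure_trim hB
  have h1' := smul_trim_le hB h1
  have h2' := trim_mono_smul hB h2
  have hae := @rnDeriv_bounds X B (lam.trim hB) (ν.trim hB) _ (ENNReal.ofReal c)
    (ENNReal.ofReal C) ENNReal.ofReal_ne_top h1' h2'
  have hae2 : ∀ᵐ x ∂ν, ENNReal.ofReal c ≤ @Measure.rnDeriv X B (lam.trim hB) (ν.trim hB) x ∧
      @Measure.rnDeriv X B (lam.trim hB) (ν.trim hB) x ≤ ENNReal.ofReal C :=
    ae_of_ae_trim hB hae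
  filter_upwards [hae2] with x hx
  have hfin : @Measure.rnDeriv X B (lam.trim hB) (ν.trim hB) x ≠ ∞ :=
    (hx.2.trans_lt ENNReal.ofReal_lt_top).ne
  constructor
  · have := ENNReal.toReal_mono hfin hx.1
    rwa [ENNReal.toReal_ofReal hc.le] at this
  · have := ENNReal.toReal_mono ENNReal.ofReal_ne_top hx.2
    rwa [ENNReal.toReal_ofReal (hc.le.trans hcC)] at this

end TrimRN

section PureRN2
variable {α : Type*} [MeasurableSpace α]

lemma rn_setIntegral (p q : Measure α) [IsFiniteMeasure p] [IsFiniteMeasure q] (hac : p ≪ q)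
    (s : Set α) : ∫ x in s, (p.rnDeriv q x).toReal ∂q = (p s).toReal :=
  Measure.setIntegral_toReal_rnDeriv hac s

lemma rn_weighted (p q : Measure α) [IsFiniteMeasure p] [IsFiniteMeasure q] (hac : p ≪ q)
    (w : α → ℝ) : ∫ x, (p.rnDeriv q x).toReal * w x ∂q = ∫ x, w x ∂p := by
  simpa [smul_eq_mul] using integral_rnDeriv_smul hac (f := w)

end PureRN2

section TrimRN2
variable {X : Type*} {mX : MeasurableSpace X} {B : MeasurableSpace X} (hB : B ≤ mX)
  (ν lam : @Measure X mX) [IsFiniteMeasure ν] [IsFiniteMeasure lam]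

omit [IsFiniteMeasure ν] [IsFiniteMeasure lam] in
lemma trim_ac {C : ℝ≥0∞} (h2 : lam ≤ C • ν) : lam.trim hB ≪ ν.trim hB := by
  refine Measure.AbsolutelyContinuous.mk fun s hs hs0 => ?_
  rw [trim_measurableSet_eq hB hs] at hs0 ⊢
  have := Measure.le_iff.1 h2 s (hB s hs)
  rw [Measure.smul_apply, smul_eq_mul, hs0, mul_zero] at this
  exact le_antisymm this (zero_le)

variable {C : ℝ≥0∞} (h2 : lam ≤ C • ν)

include h2 in
lemma rdd_setIntegral {s : Set X} (hs : MeasurableSet[B] s) :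
    ∫ x in s, rdd hB ν lam x ∂ν = (lam s).toReal := by
  haveI : IsFiniteMeasure (ν.trim hB) := isFiniteMeasure_trim hB
  haveI : IsFiniteMeasure (lam.trim hB) := isFiniteMeasure_trim hB
  have hsm : StronglyMeasurable[B] (rdd hB ν lam) :=
    (@Measure.measurable_rnDeriv X B _ _).ennreal_toReal.stronglyMeasurable
  calc ∫ x in s, rdd hB ν lam x ∂ν = ∫ x in s, rdd hB ν lam x ∂(ν.trim hB) :=
        setIntegral_trim hB hsm hs
    _ = ((lam.trim hB) s).toReal := @rn_setIntegral X B (lam.trim hB) (ν.trim hB) _ _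
        (trim_ac hB ν lam h2) s
    _ = (lam s).toReal := by rw [trim_measurableSet_eq hB hs]

include h2 in
lemma rdd_weighted {w : X → ℝ} (hw : Measurable[B] w) :
    ∫ x, rdd hB ν lam x * w x ∂ν = ∫ x, w x ∂lam := by
  haveI : IsFiniteMeasure (ν.trim hB) := isFiniteMeasure_trim hB
  haveI : IsFiniteMeasure (lam.trim hB) := isFiniteMeasure_trim hB
  have hsm : StronglyMeasurable[B] (fun x => rdd hB ν lam x * w x) :=
    ((@Measure.measurable_rnDeriv X B _ _).ennreal_toReal.mul hw).stronglyMeasurable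
  calc ∫ x, rdd hB ν lam x * w x ∂ν = ∫ x, rdd hB ν lam x * w x ∂(ν.trim hB) :=
        integral_trim hB hsm
    _ = ∫ x, w x ∂(lam.trim hB) := @rn_weighted X B (lam.trim hB) (ν.trim hB) _ _
        (trim_ac hB ν lam h2) w
    _ = ∫ x, w x ∂lam := (integral_trim hB hw.stronglyMeasurable).symm

end TrimRN2

section Perg

variable {X : Type*} {mX : MeasurableSpace X}

/-- truncated RN derivative of trimmed measures -/
noncomputable def tfun (c C : ℝ) {B : MeasurableSpace X} (hB : B ≤ mX)
    (ν lam : @Measure X mX) : X → ℝ :=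
  fun x => max c (min C (rdd hB ν lam x))

variable {B : MeasurableSpace X} (hB : B ≤ mX) (ν lam : @Measure X mX)
  [IsProbabilityMeasure ν] [IsProbabilityMeasure lam]
  {c C : ℝ} (hc : 0 < c) (hcC : c ≤ C)
  (h1 : ENNReal.ofReal c • ν ≤ lam) (h2 : lam ≤ ENNReal.ofReal C • ν)

omit [IsProbabilityMeasure ν] [IsProbabilityMeasure lam] in
lemma tfun_meas : Measurable[B] (tfun c C hB ν lam) :=
  measurable_const.max (measurable_const.min (rdd_measurable hB ν lam))

include hcC in
omit [IsProbabilityMeasure ν] [IsProbabilityMeasure lam] in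
lemma tfun_mem : ∀ x, c ≤ tfun c C hB ν lam x ∧ tfun c C hB ν lam x ≤ C := by
  intro x
  refine ⟨le_max_left _ _, max_le hcC (min_le_left _ _)⟩

include hc hcC h1 h2 in
lemma tfun_eq_ae : tfun c C hB ν lam =ᵐ[ν] rdd hB ν lam := by
  filter_upwards [rdd_bounds hB ν lam hc hcC h1 h2] with x hx
  simp only [tfun, min_eq_right hx.2, max_eq_right hx.1]

include hc hcC h1 h2 in
lemma tfun_weighted {w : X → ℝ} (hw : Measurable[B] w) :
    ∫ x, tfun c C hB ν lam x * w x ∂ν = ∫ x, w x ∂lam := by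
  rw [integral_congr_ae (g := fun x => rdd hB ν lam x * w x)
    ((tfun_eq_ae hB ν lam hc hcC h1 h2).mono fun x hx => by simp only [hx])]
  exact rdd_weighted hB ν lam h2 hw

include hc hcC h1 h2 in
lemma tfun_setIntegral {s : Set X} (hs : MeasurableSet[B] s) :
    ∫ x in s, tfun c C hB ν lam x ∂ν = (lam s).toReal := by
  rw [integral_congr_ae (ae_restrict_of_ae (tfun_eq_ae hB ν lam hc hcC h1 h2))]
  exact rdd_setIntegral hB ν lam h2 hs

omit [IsProbabilityMeasure lam] in
lemma integ_bdd {f : X → ℝ} (hf : Measurable[mX] f) {K : ℝ} (hK : ∀ x, |f x| ≤ K) :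
    Integrable f ν :=
  (integrable_const K).mono' hf.aestronglyMeasurable
    (Eventually.of_forall fun x => by simpa using hK x)

end Perg


lemma ae_eq_of_setIntegral_eq {α : Type*} [m : MeasurableSpace α] (μ : Measure α)
    [IsFiniteMeasure μ] (f g : α → ℝ) (hf : Integrable f μ) (hg : Integrable g μ)
    (heq : ∀ s, MeasurableSet s → ∫ x in s, f x ∂μ = ∫ x in s, g x ∂μ) : f =ᵐ[μ] g :=
  ae_eq_of_forall_setIntegral_eq_of_sigmaFinite (fun _ _ _ => hf.integrableOn)
    (fun _ _ _ => hg.integrableOn) (fun s hs _ => heq s hs)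

section PergMain

variable {X : Type*} {mX : MeasurableSpace X}

lemma perg (A : ℕ → MeasurableSpace X) (hanti : Antitone A) (hAm : ∀ i, A i ≤ mX)
    (hAinf : (⨅ i, A i) ≤ mX)
    (ν lam : @Measure X mX) [IsProbabilityMeasure ν] [IsProbabilityMeasure lam]
    {c C : ℝ} (hc : 0 < c) (hcC : c ≤ C)
    (h1 : ENNReal.ofReal c • ν ≤ lam) (h2 : lam ≤ ENNReal.ofReal C • ν) :
    Tendsto (fun i => ∫ x, -Real.log (rdd (hAm i) ν lam x) ∂ν) atTop
      (𝓝 (∫ x, -Real.log (rdd hAinf ν lam x) ∂ν)) ∧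
    ∀ i, ∫ x, -Real.log (rdd hAinf ν lam x) ∂ν
      ≤ ∫ x, -Real.log (rdd (hAm i) ν lam x) ∂ν := by
  classical
  set t : ℕ → X → ℝ := fun i => tfun c C (hAm i) ν lam with ht
  set tinf : X → ℝ := tfun c C hAinf ν lam with htinf
  -- J agreement
  have hJ : ∀ i, ∫ x, -Real.log (rdd (hAm i) ν lam x) ∂ν = ∫ x, -Real.log (t i x) ∂ν :=
    fun i => (integral_congr_ae
      ((tfun_eq_ae (hAm i) ν lam hc hcC h1 h2).fun_comp (fun y => -Real.log y))).symm
  have hJinf : ∫ x, -Real.log (rdd hAinf ν lam x) ∂ν = ∫ x, -Real.log (tinf x) ∂ν :=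
    (integral_congr_ae
      ((tfun_eq_ae hAinf ν lam hc hcC h1 h2).fun_comp (fun y => -Real.log y))).symm
  -- basic properties
  have hmeas_t : ∀ i, Measurable[A i] (t i) := fun i => tfun_meas (hAm i) ν lam
  have hmeas_tinf : Measurable[⨅ i, A i] tinf := tfun_meas hAinf ν lam
  have hmem : ∀ i x, c ≤ t i x ∧ t i x ≤ C := fun i => tfun_mem (hAm i) ν lam hcC
  have hmeminf : ∀ x, c ≤ tinf x ∧ tinf x ≤ C := tfun_mem hAinf ν lam hcC
  have hm' : ∀ i, Measurable[mX] (t i) := fun i => (hmeas_t i).mono (hAm i) le_rfl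
  have hm'inf : Measurable[mX] tinf := hmeas_tinf.mono hAinf le_rfl
  have hCpos : 0 < C := lt_of_lt_of_le hc hcC
  have habs : ∀ i x, |t i x| ≤ C := fun i x =>
    abs_le.2 ⟨by linarith [(hmem i x).1], (hmem i x).2⟩
  have habsinf : ∀ x, |tinf x| ≤ C := fun x =>
    abs_le.2 ⟨by linarith [(hmeminf x).1], (hmeminf x).2⟩
  -- weighted identities
  have W : ∀ (i : ℕ) {w : X → ℝ}, Measurable[A i] w →
      ∫ x, t i x * w x ∂ν = ∫ x, w x ∂lam :=
    fun i _ hw => tfun_weighted (hAm i) ν lam hc hcC h1 h2 hw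
  have Winf : ∀ {w : X → ℝ}, Measurable[⨅ i, A i] w →
      ∫ x, tinf x * w x ∂ν = ∫ x, w x ∂lam :=
    fun {w} hw => tfun_weighted hAinf ν lam hc hcC h1 h2 hw
  set a : ℕ → ℝ := fun i => ∫ x, t i x * t i x ∂ν with ha
  set ainf : ℝ := ∫ x, tinf x * tinf x ∂ν with hainf
  have hWij : ∀ i j, i ≤ j → ∫ x, t i x * t j x ∂ν = a j := by
    intro i j hij
    rw [W i ((hmeas_t j).mono (hanti hij) le_rfl), ha]
    exact (W j (hmeas_t j)).symm
  have hWiinf : ∀ i, ∫ x, t i x * tinf x ∂ν = ainf := by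
    intro i
    rw [W i (hmeas_tinf.mono (iInf_le A i) le_rfl), hainf]
    exact (Winf hmeas_tinf).symm
  -- integrability of bounded products
  have hint_mul : ∀ (f g : X → ℝ), Measurable[mX] f → Measurable[mX] g →
      (∀ x, |f x| ≤ C) → (∀ x, |g x| ≤ C) → Integrable (fun x => f x * g x) ν := by
    intro f g hf hg hbf hbg
    refine integ_bdd ν (hf.mul hg) (K := C * C) fun x => ?_
    rw [abs_mul]
    exact mul_le_mul (hbf x) (hbg x) (abs_nonneg _) (le_trans (abs_nonneg _) (hbf x))
  -- squared difference expansion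
  have hsq : ∀ (f g : X → ℝ), Measurable[mX] f → Measurable[mX] g →
      (∀ x, |f x| ≤ C) → (∀ x, |g x| ≤ C) →
      (∫ x, f x * g x ∂ν = ∫ x, g x * g x ∂ν) →
      ∫ x, (f x - g x)^2 ∂ν = ∫ x, f x * f x ∂ν - ∫ x, g x * g x ∂ν := by
    intro f g hf hg hbf hbg hfg
    have hif := hint_mul f f hf hf hbf hbf
    have hig := hint_mul g g hg hg hbg hbg
    have hifg := hint_mul f g hf hg hbf hbg
    have hexp : ∀ x, (f x - g x)^2 = f x * f x - (2 * (f x * g x) - g x * g x) := by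
      intro x; ring
    calc ∫ x, (f x - g x)^2 ∂ν
        = ∫ x, (f x * f x - (2 * (f x * g x) - g x * g x)) ∂ν := by
          exact integral_congr_ae (Eventually.of_forall hexp)
      _ = ∫ x, f x * f x ∂ν - ∫ x, (2 * (f x * g x) - g x * g x) ∂ν :=
          integral_sub hif ((hifg.const_mul 2).sub hig)
      _ = ∫ x, f x * f x ∂ν - (2 * ∫ x, f x * g x ∂ν - ∫ x, g x * g x ∂ν) := by
          rw [integral_sub (hifg.const_mul 2) hig, integral_const_mul]
      _ = ∫ x, f x * f x ∂ν - ∫ x, g x * g x ∂ν := by rw [hfg]; ring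
  have hdiff : ∀ i j, i ≤ j → ∫ x, (t i x - t j x)^2 ∂ν = a i - a j :=
    fun i j hij => hsq (t i) (t j) (hm' i) (hm' j) (habs i) (habs j) (hWij i j hij)
  have hdiffinf : ∀ i, ∫ x, (t i x - tinf x)^2 ∂ν = a i - ainf :=
    fun i => hsq (t i) tinf (hm' i) hm'inf (habs i) habsinf (hWiinf i)
  have hanti_a : Antitone a := by
    intro i j hij
    have h := hdiff i j hij
    have h0 : 0 ≤ ∫ x, (t i x - t j x)^2 ∂ν := integral_nonneg fun x => sq_nonneg _
    linarith
  have hainf_le : ∀ i, ainf ≤ a i := by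
    intro i
    have h := hdiffinf i
    have h0 : 0 ≤ ∫ x, (t i x - tinf x)^2 ∂ν := integral_nonneg fun x => sq_nonneg _
    linarith
  have hbdd : BddBelow (Set.range a) := ⟨ainf, by rintro _ ⟨i, rfl⟩; exact hainf_le i⟩
  set α := ⨅ i, a i with hα
  have hta : Tendsto a atTop (𝓝 α) := tendsto_atTop_ciInf hanti_a hbdd
  have hαle : ∀ i, α ≤ a i := fun i => ciInf_le hbdd i
  -- subsequence
  have hNk : ∀ k : ℕ, ∃ N, ∀ n ≥ N, a n < α + (1/4:ℝ)^k := by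
    intro k
    have hev : ∀ᶠ n in atTop, a n < α + (1/4:ℝ)^k :=
      hta.eventually (gt_mem_nhds (lt_add_of_pos_right α (by positivity)))
    exact eventually_atTop.1 hev
  choose N hN using hNk
  set φ : ℕ → ℕ := fun k => Nat.rec (N 0) (fun k ih => max (N (k+1)) (ih+1)) k with hφ
  have hφsm : StrictMono φ := strictMono_nat_of_lt_succ fun k =>
    lt_of_lt_of_le (Nat.lt_succ_self _) (le_max_right _ _)
  have hφN : ∀ k, N k ≤ φ k := by
    intro k
    cases k with
    | zero => exact le_rfl
    | succ k => exact le_max_left _ _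
  have hφa : ∀ k, a (φ k) < α + (1/4:ℝ)^k := fun k => hN k _ (hφN k)
  -- summable L¹ differences
  have hd2 : ∀ k, ∫ x, (t (φ k) x - t (φ (k+1)) x)^2 ∂ν ≤ (1/4:ℝ)^k := by
    intro k
    rw [hdiff _ _ (hφsm.monotone (Nat.le_succ k))]
    have := hφa k
    have := hαle (φ (k+1))
    linarith
  have habs_d : ∀ k x, |t (φ (k+1)) x - t (φ k) x|
      ≤ (t (φ k) x - t (φ (k+1)) x)^2 * 2^k + (1/2:ℝ)^k := by
    intro k x
    have h2k : ((1/2:ℝ))^k * 2^k = 1 := by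
      rw [← mul_pow]; norm_num
    have hp : (0:ℝ) < (1/2:ℝ)^k := by positivity
    have hq : (0:ℝ) < (2:ℝ)^k := by positivity
    have hsymm : (t (φ k) x - t (φ (k+1)) x)^2 = (t (φ (k+1)) x - t (φ k) x)^2 := by ring
    rw [hsymm]
    nlinarith [sq_nonneg (|t (φ (k+1)) x - t (φ k) x| - (1/2:ℝ)^k),
      sq_abs (t (φ (k+1)) x - t (φ k) x), abs_nonneg (t (φ (k+1)) x - t (φ k) x)]
  have hint_abs : ∀ i j, Integrable (fun x => |t i x - t j x|) ν := by
    intro i j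
    refine integ_bdd ν ((hm' i).sub (hm' j)).abs (K := C + C) fun x => ?_
    rw [abs_abs]
    calc |t i x - t j x| ≤ |t i x| + |t j x| := abs_sub _ _
      _ ≤ C + C := add_le_add (habs i x) (habs j x)
  have hint_sq : ∀ i j, Integrable (fun x => (t i x - t j x)^2) ν := by
    intro i j
    refine integ_bdd ν (((hm' i).sub (hm' j)).pow_const 2) (K := (C + C)^2) fun x => ?_
    rw [abs_pow]
    refine pow_le_pow_left₀ (abs_nonneg _) ?_ 2
    calc |t i x - t j x| ≤ |t i x| + |t j x| := abs_sub _ _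
      _ ≤ C + C := add_le_add (habs i x) (habs j x)
  have hintd : ∀ k, ∫ x, |t (φ (k+1)) x - t (φ k) x| ∂ν ≤ 2 * (1/2:ℝ)^k := by
    intro k
    have hi2 : Integrable
        (fun x => (t (φ k) x - t (φ (k+1)) x)^2 * 2^k + (1/2:ℝ)^k) ν :=
      ((hint_sq (φ k) (φ (k+1))).mul_const _).add (integrable_const _)
    calc ∫ x, |t (φ (k+1)) x - t (φ k) x| ∂ν
        ≤ ∫ x, ((t (φ k) x - t (φ (k+1)) x)^2 * 2^k + (1/2:ℝ)^k) ∂ν :=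
          integral_mono (hint_abs _ _) hi2 (habs_d k)
      _ = (∫ x, (t (φ k) x - t (φ (k+1)) x)^2 ∂ν) * 2^k + (1/2:ℝ)^k := by
          rw [integral_add ((hint_sq _ _).mul_const _) (integrable_const _),
            integral_mul_const, integral_const]
          simp [measure_univ]
      _ ≤ (1/4:ℝ)^k * 2^k + (1/2:ℝ)^k := by
          have := hd2 k
          have hq : (0:ℝ) ≤ (2:ℝ)^k := by positivity
          nlinarith
      _ = 2 * (1/2:ℝ)^k := by
          have : (1/4:ℝ)^k * 2^k = (1/2:ℝ)^k := by
            rw [← mul_pow]; norm_num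
          rw [this]; ring
  -- a.e. convergence of the subsequence
  have haemeas_d : ∀ k, Measurable[mX] fun x => ENNReal.ofReal |t (φ (k+1)) x - t (φ k) x| :=
    fun k => ((hm' _).sub (hm' _)).abs.ennreal_ofReal
  have hsum_lint : ∫⁻ x, ∑' k, ENNReal.ofReal |t (φ (k+1)) x - t (φ k) x| ∂ν ≠ ∞ := by
    rw [lintegral_tsum fun k => (haemeas_d k).aemeasurable]
    have heq : ∀ k, ∫⁻ x, ENNReal.ofReal |t (φ (k+1)) x - t (φ k) x| ∂ν
        = ENNReal.ofReal (∫ x, |t (φ (k+1)) x - t (φ k) x| ∂ν) := fun k =>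
      (ofReal_integral_eq_lintegral_ofReal (hint_abs _ _)
        (Eventually.of_forall fun x => abs_nonneg _)).symm
    have hsummable : Summable (fun k : ℕ => 2 * (1/2:ℝ)^k) :=
      (summable_geometric_of_lt_one (by norm_num) (by norm_num)).mul_left 2
    have hle : ∑' k, ∫⁻ x, ENNReal.ofReal |t (φ (k+1)) x - t (φ k) x| ∂ν
        ≤ ENNReal.ofReal (∑' k, 2 * (1/2:ℝ)^k) := by
      calc ∑' k, ∫⁻ x, ENNReal.ofReal |t (φ (k+1)) x - t (φ k) x| ∂ν
          = ∑' k, ENNReal.ofReal (∫ x, |t (φ (k+1)) x - t (φ k) x| ∂ν) := by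
            exact tsum_congr heq
        _ ≤ ∑' k, ENNReal.ofReal (2 * (1/2:ℝ)^k) :=
            ENNReal.tsum_le_tsum fun k => ENNReal.ofReal_le_ofReal (hintd k)
        _ = ENNReal.ofReal (∑' k, 2 * (1/2:ℝ)^k) :=
            (ENNReal.ofReal_tsum_of_nonneg (fun k => by positivity) hsummable).symm
    exact (lt_of_le_of_lt hle ENNReal.ofReal_lt_top).ne
  have haeconv : ∀ᵐ x ∂ν, ∃ L : ℝ, Tendsto (fun k => t (φ k) x) atTop (𝓝 L) := by
    have hae := ae_lt_top (Measurable.ennreal_tsum haemeas_d) hsum_lint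
    filter_upwards [hae] with x hx
    have hsum_abs : Summable (fun k => |t (φ (k+1)) x - t (φ k) x|) := by
      have := ENNReal.summable_toReal hx.ne
      simpa [ENNReal.toReal_ofReal (abs_nonneg _)] using this
    have hsum : Summable (fun k => t (φ (k+1)) x - t (φ k) x) := hsum_abs.of_abs
    have htel : ∀ n, ∑ k ∈ Finset.range n, (t (φ (k+1)) x - t (φ k) x)
        = t (φ n) x - t (φ 0) x := fun n => Finset.sum_range_sub (fun k => t (φ k) x) n
    have hpart : Tendsto (fun n => t (φ n) x - t (φ 0) x) atTop
        (𝓝 (∑' k, (t (φ (k+1)) x - t (φ k) x))) := by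
      have := hsum.hasSum.tendsto_sum_nat
      simpa [htel] using this
    exact ⟨(∑' k, (t (φ (k+1)) x - t (φ k) x)) + t (φ 0) x, by
      simpa using hpart.add_const (t (φ 0) x)⟩
  -- the limit function
  set ρ : X → ℝ := fun x =>
    max c (min C (limsup (fun k => ENNReal.ofReal (t (φ k) x)) atTop).toReal) with hρ
  have hρmem : ∀ x, c ≤ ρ x ∧ ρ x ≤ C :=
    fun x => ⟨le_max_left _ _, max_le hcC (min_le_left _ _)⟩
  have hρabs : ∀ x, |ρ x| ≤ C := fun x => abs_le.2 ⟨by linarith [(hρmem x).1], (hρmem x).2⟩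
  have hρmeasn : ∀ n, Measurable[A n] ρ := by
    intro n
    have hshift : ρ = fun x =>
        max c (min C (limsup (fun k => ENNReal.ofReal (t (φ (k + n)) x)) atTop).toReal) := by
      funext x
      rw [hρ]
      rw [limsup_nat_add (fun k => ENNReal.ofReal (t (φ k) x)) n]
    rw [hshift]
    have hkm : ∀ k, Measurable[A n] (t (φ (k + n))) := fun k =>
      (hmeas_t _).mono (hanti (le_trans (Nat.le_add_left n k) (hφsm.le_apply))) le_rfl
    exact measurable_const.max (measurable_const.min
      ((Measurable.limsup (fun k => (hkm k).ennreal_ofReal)).ennreal_toReal))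
  have hρmeasinf : Measurable[⨅ i, A i] ρ :=
    fun s hs => MeasurableSpace.measurableSet_iInf.2 fun n => hρmeasn n hs
  have hρmeas_mX : Measurable[mX] ρ := hρmeasinf.mono hAinf le_rfl
  have hρtend : ∀ᵐ x ∂ν, Tendsto (fun k => t (φ k) x) atTop (𝓝 (ρ x)) := by
    filter_upwards [haeconv] with x hx
    obtain ⟨L, hL⟩ := hx
    have hLc : c ≤ L := ge_of_tendsto' hL fun k => (hmem (φ k) x).1
    have hLC : L ≤ C := le_of_tendsto' hL fun k => (hmem (φ k) x).2
    have hof : Tendsto (fun k => ENNReal.ofReal (t (φ k) x)) atTop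
        (𝓝 (ENNReal.ofReal L)) := (ENNReal.continuous_ofReal.tendsto L).comp hL
    have hls : limsup (fun k => ENNReal.ofReal (t (φ k) x)) atTop = ENNReal.ofReal L :=
      hof.limsup_eq
    have hρx : ρ x = L := by
      rw [hρ]
      simp only
      rw [hls, ENNReal.toReal_ofReal (hc.le.trans hLc), min_eq_right hLC, max_eq_right hLc]
    rwa [hρx]
  -- set integrals of ρ on A∞-sets
  have hsetρ : ∀ s : Set X, MeasurableSet[⨅ i, A i] s →
      ∫ x in s, ρ x ∂ν = (lam s).toReal := by
    intro s hs
    have hDCT : Tendsto (fun k => ∫ x in s, t (φ k) x ∂ν) atTop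
        (𝓝 (∫ x in s, ρ x ∂ν)) := by
      refine tendsto_integral_of_dominated_convergence (fun _ => C)
        (fun k => (hm' (φ k)).aestronglyMeasurable) (integrable_const C)
        (fun k => Eventually.of_forall fun x => ?_) (ae_restrict_of_ae hρtend)
      rw [Real.norm_eq_abs]
      exact habs (φ k) x
    have hconst : ∀ k, ∫ x in s, t (φ k) x ∂ν = (lam s).toReal := fun k =>
      tfun_setIntegral (hAm (φ k)) ν lam hc hcC h1 h2 (iInf_le A (φ k) s hs)
    simp only [hconst] at hDCT
    exact tendsto_nhds_unique hDCT tendsto_const_nhds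
  -- identification ρ = t∞ a.e.
  have hρeq : ρ =ᵐ[ν] tinf := by
    haveI : IsFiniteMeasure (ν.trim hAinf) := isFiniteMeasure_trim hAinf
    have hint_tr : ∀ (f : X → ℝ), Measurable[⨅ i, A i] f → (∀ x, |f x| ≤ C) →
        Integrable f (ν.trim hAinf) := by
      intro f hf hbd
      exact (integrable_const C).mono' hf.stronglyMeasurable.aestronglyMeasurable
        (Eventually.of_forall fun x => by simpa using hbd x)
    have key : ρ =ᵐ[ν.trim hAinf] tinf := by
      refine @ae_eq_of_setIntegral_eq X (⨅ i, A i) (ν.trim hAinf) (isFiniteMeasure_trim hAinf)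
        ρ tinf (hint_tr ρ hρmeasinf hρabs) (hint_tr tinf hmeas_tinf habsinf) ?_
      intro s hs
      rw [← setIntegral_trim hAinf hρmeasinf.stronglyMeasurable hs,
        ← setIntegral_trim hAinf hmeas_tinf.stronglyMeasurable hs,
        hsetρ s hs, tfun_setIntegral hAinf ν lam hc hcC h1 h2 hs]
    exact ae_eq_of_ae_eq_trim key
  -- a (φ k) → ainf
  have hsq_tend : Tendsto (fun k => a (φ k)) atTop (𝓝 ainf) := by
    have hDCT : Tendsto (fun k => ∫ x, t (φ k) x * t (φ k) x ∂ν) atTop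
        (𝓝 (∫ x, ρ x * ρ x ∂ν)) := by
      refine tendsto_integral_of_dominated_convergence (fun _ => C * C)
        (fun k => ((hm' (φ k)).mul (hm' (φ k))).aestronglyMeasurable)
        (integrable_const _) (fun k => Eventually.of_forall fun x => ?_)
        (hρtend.mono fun x hx => hx.mul hx)
      rw [Real.norm_eq_abs, abs_mul]
      exact mul_le_mul (habs (φ k) x) (habs (φ k) x) (abs_nonneg _)
        (le_trans (abs_nonneg _) (habs (φ k) x))
    have hrr : ∫ x, ρ x * ρ x ∂ν = ainf := by
      rw [hainf]
      exact integral_congr_ae (hρeq.mul hρeq)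
    rwa [hrr] at hDCT
  have hαainf : α = ainf :=
    tendsto_nhds_unique (hta.comp hφsm.tendsto_atTop) hsq_tend
  -- L² convergence of the full sequence
  have hsq0 : Tendsto (fun i => ∫ x, (t i x - tinf x)^2 ∂ν) atTop (𝓝 0) := by
    have heqf : (fun i => ∫ x, (t i x - tinf x)^2 ∂ν) = fun i => a i - ainf :=
      funext hdiffinf
    rw [heqf]
    have := hta.sub_const ainf
    rwa [hαainf, sub_self] at this
  have hint_absinf : ∀ i, Integrable (fun x => |t i x - tinf x|) ν := by
    intro i
    refine integ_bdd ν ((hm' i).sub hm'inf).abs (K := C + C) fun x => ?_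
    rw [abs_abs]
    calc |t i x - tinf x| ≤ |t i x| + |tinf x| := abs_sub _ _
      _ ≤ C + C := add_le_add (habs i x) (habsinf x)
  -- L¹ convergence
  have hl1 : Tendsto (fun i => ∫ x, |t i x - tinf x| ∂ν) atTop (𝓝 0) := by
    rw [Metric.tendsto_atTop]
    intro ε hε
    obtain ⟨M, hM⟩ := Metric.tendsto_atTop.1 hsq0 (ε^2/9) (by positivity)
    refine ⟨M, fun n hn => ?_⟩
    have hint_abs' := hint_absinf n
    have hint_sq' : Integrable (fun x => (t n x - tinf x)^2) ν := by
      refine integ_bdd ν (((hm' n).sub hm'inf).pow_const 2) (K := (C + C)^2) fun x => ?_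
      rw [abs_pow]
      refine pow_le_pow_left₀ (abs_nonneg _) ?_ 2
      calc |t n x - tinf x| ≤ |t n x| + |tinf x| := abs_sub _ _
        _ ≤ C + C := add_le_add (habs n x) (habsinf x)
    have hsq_small : ∫ x, (t n x - tinf x)^2 ∂ν < ε^2/9 := by
      have := hM n hn
      rwa [Real.dist_eq, sub_zero,
        abs_of_nonneg (integral_nonneg fun x => sq_nonneg _)] at this
    have hptw : ∀ x, |t n x - tinf x| ≤ (t n x - tinf x)^2 * (3/ε) + ε/3 := by
      intro x
      set y := t n x - tinf x with hy
      have key : |y| * ε ≤ 3*y^2 + ε^2/3 := by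
        have hq1 : 0 ≤ (|y| - ε/3)^2 := sq_nonneg _
        have hq2 : (|y| - ε/3)^2 = y^2 - 2*(ε/3)*|y| + ε^2/9 := by
          rw [sub_sq, sq_abs]; ring
        nlinarith [hq1, hq2, sq_nonneg y, sq_nonneg ε, abs_nonneg y]
      have hk2 : |y| ≤ (3*y^2 + ε^2/3)/ε := (le_div_iff₀ hε).2 key
      have hk3 : (3*y^2 + ε^2/3)/ε = y^2*(3/ε) + ε/3 := by field_simp
      linarith
    have hb : ∫ x, |t n x - tinf x| ∂ν
        ≤ (∫ x, (t n x - tinf x)^2 ∂ν) * (3/ε) + ε/3 := by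
      calc ∫ x, |t n x - tinf x| ∂ν
          ≤ ∫ x, ((t n x - tinf x)^2 * (3/ε) + ε/3) ∂ν :=
            integral_mono hint_abs' ((hint_sq'.mul_const _).add (integrable_const _)) hptw
        _ = (∫ x, (t n x - tinf x)^2 ∂ν) * (3/ε) + ε/3 := by
            rw [integral_add (hint_sq'.mul_const _) (integrable_const _),
              integral_mul_const, integral_const]
            simp [measure_univ]
    have hnn : 0 ≤ ∫ x, |t n x - tinf x| ∂ν := integral_nonneg fun x => abs_nonneg _
    rw [Real.dist_eq, sub_zero, abs_of_nonneg hnn]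
    have h3ε : (0:ℝ) < 3/ε := by positivity
    have : (∫ x, (t n x - tinf x)^2 ∂ν) * (3/ε) < (ε^2/9) * (3/ε) :=
      mul_lt_mul_of_pos_right hsq_small h3ε
    have hc1 : (ε^2/9) * (3/ε) = ε/3 := by field_simp; ring
    linarith
  -- integrability of logs
  have hlog_int : ∀ (f : X → ℝ), Measurable[mX] f → (∀ x, c ≤ f x ∧ f x ≤ C) →
      Integrable (fun x => Real.log (f x)) ν := by
    intro f hf hmemf
    refine integ_bdd ν (Real.measurable_log.comp hf)
      (K := max |Real.log c| |Real.log C|) fun x => ?_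
    have h1' : Real.log c ≤ Real.log (f x) :=
      (Real.log_le_log_iff hc (lt_of_lt_of_le hc (hmemf x).1)).2 (hmemf x).1
    have h2' : Real.log (f x) ≤ Real.log C :=
      (Real.log_le_log_iff (lt_of_lt_of_le hc (hmemf x).1) hCpos).2 (hmemf x).2
    refine abs_le.2 ⟨?_, ?_⟩
    · calc -(max |Real.log c| |Real.log C|) ≤ -|Real.log c| := by
            simp [le_max_left]
        _ ≤ Real.log c := neg_abs_le _
        _ ≤ Real.log (f x) := h1'
    · calc Real.log (f x) ≤ Real.log C := h2'
        _ ≤ |Real.log C| := le_abs_self _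
        _ ≤ max |Real.log c| |Real.log C| := le_max_right _ _
  -- Lipschitz property of log on [c, ∞)
  have hloglip0 : ∀ y z : ℝ, c ≤ y → c ≤ z → z ≤ y →
      Real.log y - Real.log z ≤ (y - z) / c := by
    intro y z hy hz hzy
    have hy0 : 0 < y := lt_of_lt_of_le hc hy
    have hz0 : 0 < z := lt_of_lt_of_le hc hz
    have hlog : Real.log y - Real.log z = Real.log (y/z) :=
      (Real.log_div hy0.ne' hz0.ne').symm
    rw [hlog]
    calc Real.log (y/z) ≤ y/z - 1 := Real.log_le_sub_one_of_pos (div_pos hy0 hz0)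
      _ = (y - z)/z := by field_simp
      _ ≤ (y - z)/c := div_le_div_of_nonneg_left (sub_nonneg.2 hzy) hc hz
  have hloglip : ∀ y z : ℝ, c ≤ y → c ≤ z →
      |Real.log y - Real.log z| ≤ |y - z| / c := by
    intro y z hy hz
    rcases le_total z y with h | h
    · rw [abs_of_nonneg (sub_nonneg.2 ((Real.log_le_log_iff
        (lt_of_lt_of_le hc hz) (lt_of_lt_of_le hc hy)).2 h)),
        abs_of_nonneg (sub_nonneg.2 h)]
      exact hloglip0 y z hy hz h
    · rw [abs_sub_comm, abs_sub_comm y z,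
        abs_of_nonneg (sub_nonneg.2 ((Real.log_le_log_iff
          (lt_of_lt_of_le hc hy) (lt_of_lt_of_le hc hz)).2 h)),
        abs_of_nonneg (sub_nonneg.2 h)]
      exact hloglip0 z y hz hy h
  -- convergence of entropy integrals
  have hJ_tend : Tendsto (fun i => ∫ x, -Real.log (t i x) ∂ν) atTop
      (𝓝 (∫ x, -Real.log (tinf x) ∂ν)) := by
    rw [tendsto_iff_dist_tendsto_zero]
    have hbound : ∀ i, dist (∫ x, -Real.log (t i x) ∂ν) (∫ x, -Real.log (tinf x) ∂ν)
        ≤ (∫ x, |t i x - tinf x| ∂ν) / c := by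
      intro i
      have hint1 := hlog_int (t i) (hm' i) (hmem i)
      have hint2 := hlog_int tinf hm'inf hmeminf
      have heq : ∫ x, -Real.log (t i x) ∂ν - ∫ x, -Real.log (tinf x) ∂ν
          = ∫ x, (Real.log (tinf x) - Real.log (t i x)) ∂ν := by
        rw [integral_sub hint2 hint1, integral_neg, integral_neg]
        ring
      rw [Real.dist_eq, heq]
      calc |∫ x, (Real.log (tinf x) - Real.log (t i x)) ∂ν|
          ≤ ∫ x, |Real.log (tinf x) - Real.log (t i x)| ∂ν := by
            simpa [Real.norm_eq_abs] using
              norm_integral_le_integral_norm (fun x => Real.log (tinf x) - Real.log (t i x)) (μ := ν)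
        _ ≤ ∫ x, |t i x - tinf x| / c ∂ν := by
            refine integral_mono ((hint2.sub hint1).abs) ((hint_absinf i).div_const c)
              fun x => ?_
            rw [abs_sub_comm (t i x) (tinf x)]
            exact hloglip (tinf x) (t i x) (hmeminf x).1 (hmem i x).1
        _ = (∫ x, |t i x - tinf x| ∂ν) / c := integral_div c _
    have hupper : Tendsto (fun i => (∫ x, |t i x - tinf x| ∂ν) / c) atTop (𝓝 0) := by
      simpa using hl1.div_const c
    exact tendsto_of_tendsto_of_tendsto_of_le_of_le tendsto_const_nhds hupper
      (fun i => dist_nonneg) hbound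
  -- monotonicity : J∞ ≤ J i
  have hJle : ∀ i, ∫ x, -Real.log (tinf x) ∂ν ≤ ∫ x, -Real.log (t i x) ∂ν := by
    intro i
    have htinfpos : ∀ x, (0:ℝ) < tinf x := fun x => lt_of_lt_of_le hc (hmeminf x).1
    have htipos : ∀ x, (0:ℝ) < t i x := fun x => lt_of_lt_of_le hc (hmem i x).1
    have hwmeas : Measurable[⨅ i, A i] (fun x => (tinf x)⁻¹) := hmeas_tinf.inv
    have k1 : ∫ x, t i x * (tinf x)⁻¹ ∂ν = ∫ x, (tinf x)⁻¹ ∂lam :=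
      W i (hwmeas.mono (iInf_le A i) le_rfl)
    have k2 : ∫ x, tinf x * (tinf x)⁻¹ ∂ν = ∫ x, (tinf x)⁻¹ ∂lam := Winf hwmeas
    have k3 : ∫ x, tinf x * (tinf x)⁻¹ ∂ν = 1 := by
      have hone : ∀ x, tinf x * (tinf x)⁻¹ = 1 := fun x => mul_inv_cancel₀ (htinfpos x).ne'
      rw [show (fun x => tinf x * (tinf x)⁻¹) = fun _ : X => (1:ℝ) from funext hone]
      simp [measure_univ]
    have hik : ∫ x, t i x * (tinf x)⁻¹ ∂ν = 1 := by rw [k1, ← k2, k3]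
    have hpt : ∀ x, Real.log (t i x) - Real.log (tinf x) ≤ t i x * (tinf x)⁻¹ - 1 := by
      intro x
      have hd := Real.log_le_sub_one_of_pos (div_pos (htipos x) (htinfpos x))
      rw [Real.log_div (htipos x).ne' (htinfpos x).ne', div_eq_mul_inv] at hd
      exact hd
    have hint1 := hlog_int (t i) (hm' i) (hmem i)
    have hint2 := hlog_int tinf hm'inf hmeminf
    have hint3 : Integrable (fun x => t i x * (tinf x)⁻¹) ν := by
      refine integ_bdd ν ((hm' i).mul hm'inf.inv) (K := C * c⁻¹) fun x => ?_
      have hinv : (tinf x)⁻¹ ≤ c⁻¹ := inv_anti₀ hc (hmeminf x).1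
      rw [abs_of_nonneg (mul_nonneg (htipos x).le (inv_nonneg.2 (htinfpos x).le))]
      exact mul_le_mul (hmem i x).2 hinv (inv_nonneg.2 (htinfpos x).le) hCpos.le
    have hmono : ∫ x, (Real.log (t i x) - Real.log (tinf x)) ∂ν
        ≤ ∫ x, (t i x * (tinf x)⁻¹ - 1) ∂ν :=
      integral_mono (hint1.sub hint2) (hint3.sub (integrable_const 1)) hpt
    rw [integral_sub hint1 hint2, integral_sub hint3 (integrable_const 1), hik] at hmono
    have hone : ∫ _ : X, (1:ℝ) ∂ν = 1 := by simp [measure_univ]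
    rw [hone] at hmono
    have e1 : ∫ x, -Real.log (tinf x) ∂ν = -∫ x, Real.log (tinf x) ∂ν :=
      integral_neg _
    have e2 : ∫ x, -Real.log (t i x) ∂ν = -∫ x, Real.log (t i x) ∂ν :=
      integral_neg _
    rw [e1, e2]
    linarith
  -- conclusion
  constructor
  · have hfun : (fun i => ∫ x, -Real.log (rdd (hAm i) ν lam x) ∂ν)
        = fun i => ∫ x, -Real.log (t i x) ∂ν := funext hJ
    rw [hfun, hJinf]
    exact hJ_tend
  · intro i
    rw [hJ i, hJinf]
    exact hJle i

end PergMain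

section Bounds

lemma map_bounds {Γ : Type*} [Group Γ] [Countable Γ] [MeasurableSpace Γ]
    [MeasurableSingletonClass Γ]
    {X : Type*} [mX : MeasurableSpace X] [MulAction Γ X]
    (hmeas : ∀ g : Γ, Measurable (fun x : X => g • x))
    (μ : Measure Γ) [IsProbabilityMeasure μ] (ν : Measure X) [IsProbabilityMeasure ν]
    (hstat : Measure.sum (fun g : Γ => μ {g} • ν.map (fun x => g • x)) = ν)
    (hgen : ∀ g : Γ, ∃ n : ℕ, convPow μ n {g} ≠ 0) :
    ∀ g : Γ, ∃ c C : ℝ, 0 < c ∧ c ≤ C ∧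
      ENNReal.ofReal c • ν ≤ ν.map (fun x => g⁻¹ • x) ∧
      ν.map (fun x => g⁻¹ • x) ≤ ENNReal.ofReal C • ν := by
  intro g
  obtain ⟨n, hn⟩ := hgen g
  obtain ⟨m, hm⟩ := hgen g⁻¹
  haveI := convPow_isProb μ n
  haveI := convPow_isProb μ m
  set κ := convPow μ n {g} with hκ
  set κ' := convPow μ m {g⁻¹} with hκ'
  have hκ1 : κ ≤ 1 := prob_le_one
  have hκ'1 : κ' ≤ 1 := prob_le_one
  have hκtop : κ ≠ ⊤ := (lt_of_le_of_lt hκ1 ENNReal.one_lt_top).ne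
  have hκ'top : κ' ≠ ⊤ := (lt_of_le_of_lt hκ'1 ENNReal.one_lt_top).ne
  have hL := convPow_smul_map_le hmeas μ ν hstat n g
  have hL' := convPow_smul_map_le hmeas μ ν hstat m g⁻¹
  have hcomp : ((fun x : X => g⁻¹ • x) ∘ (fun x => g • x)) = id :=
    funext fun x => inv_smul_smul g x
  have e1 : (ν.map (fun x => g • x)).map (fun x => g⁻¹ • x) = ν := by
    rw [Measure.map_map (hmeas g⁻¹) (hmeas g), hcomp, Measure.map_id]
  have hlow : κ • ν ≤ ν.map (fun x => g⁻¹ • x) := by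
    have := Measure.map_mono hL (hmeas g⁻¹)
    rwa [Measure.map_smul, e1] at this
  have hup : ν.map (fun x => g⁻¹ • x) ≤ κ'⁻¹ • ν := by
    rw [Measure.le_iff']
    intro s
    have hs := Measure.le_iff'.1 hL' s
    rw [Measure.smul_apply, smul_eq_mul] at hs
    rw [Measure.smul_apply, smul_eq_mul]
    calc (ν.map (fun x => g⁻¹ • x)) s
        = κ'⁻¹ * (κ' * (ν.map (fun x => g⁻¹ • x)) s) := by
          rw [← mul_assoc, ENNReal.inv_mul_cancel hm hκ'top, one_mul]
      _ ≤ κ'⁻¹ * ν s := by gcongr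
  refine ⟨κ.toReal, (κ'⁻¹).toReal, ENNReal.toReal_pos hn hκtop, ?_, ?_, ?_⟩
  · have t1 : κ.toReal ≤ 1 := by
      simpa using ENNReal.toReal_mono ENNReal.one_ne_top hκ1
    have t2 : (1:ℝ) ≤ (κ'⁻¹).toReal := by
      have h1' : (1:ℝ≥0∞) ≤ κ'⁻¹ := ENNReal.one_le_inv.2 hκ'1
      have := ENNReal.toReal_mono (ENNReal.inv_ne_top.2 hm) h1'
      simpa using this
    linarith
  · rw [ENNReal.ofReal_toReal hκtop]; exact hlow
  · rw [ENNReal.ofReal_toReal (ENNReal.inv_ne_top.2 hm)]; exact hup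

end Bounds


/-- Let `Γ` be a countable group, `μ` a finitely supported generating probability measure
on `Γ`, and `ν` a `μ`-stationary probability measure for a measurable `Γ`-action on a
standard probability space `(X, 𝔪)`.  Let `A 1 ⊇ A 2 ⊇ ⋯` be a decreasing sequence of
`Γ`-invariant sub-σ-algebras of `𝔪` and let `A_∞ = ⨅ i, A i` be their intersection.
Then `h_μ(A_∞) = lim_i h_μ(A i) = inf_i h_μ(A i)`. -/
theorem furstenbergEntropy_iInf
    {Γ : Type*} [Group Γ] [Countable Γ] [MeasurableSpace Γ] [MeasurableSingletonClass Γ]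
    {X : Type*} (A : ℕ → MeasurableSpace X) [mX : MeasurableSpace X] [StandardBorelSpace X]
    [MulAction Γ X] (hmeas : ∀ g : Γ, Measurable (fun x : X => g • x))
    (μ : Measure Γ) [IsProbabilityMeasure μ]
    (hfin : {g : Γ | μ {g} ≠ 0}.Finite)
    (hgen : ∀ g : Γ, ∃ n : ℕ, convPow μ n {g} ≠ 0)
    (ν : Measure X) [IsProbabilityMeasure ν]
    (hstat : Measure.sum (fun g : Γ => μ {g} • ν.map (fun x => g • x)) = ν)
    (hanti : Antitone A) (hAm : ∀ i, A i ≤ mX)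
    (hAinv : ∀ (i : ℕ) (g : Γ) (s : Set X),
      MeasurableSet[A i] s → MeasurableSet[A i] ((fun x => g • x) ⁻¹' s)) :
    Tendsto (fun i => furstenbergEntropy (A i) (hAm i) μ ν) atTop
        (𝓝 (furstenbergEntropy (⨅ i, A i) ((iInf_le A 0).trans (hAm 0)) μ ν)) ∧
      furstenbergEntropy (⨅ i, A i) ((iInf_le A 0).trans (hAm 0)) μ ν =
        ⨅ i, furstenbergEntropy (A i) (hAm i) μ ν := by
  classical
  have hAinf : (⨅ i, A i) ≤ mX := (iInf_le A 0).trans (hAm 0)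
  -- rewrite the entropy as a finite sum
  have hent : ∀ (B : MeasurableSpace X) (hB : B ≤ mX),
      furstenbergEntropy B hB μ ν = ∑ g ∈ hfin.toFinset,
        (μ {g}).toReal * ∫ x, -Real.log
          (rdd hB ν (@Measure.map X X mX mX (fun y => g⁻¹ • y) ν) x) ∂ν := by
    intro B hB
    unfold furstenbergEntropy rdd
    refine tsum_eq_sum fun g hg => ?_
    rw [Set.Finite.mem_toFinset] at hg
    simp only [Set.mem_setOf_eq, not_not] at hg
    rw [hg]
    simp
  -- the per-element results
  have hper : ∀ g : Γ,
      Tendsto (fun i => ∫ x, -Real.log (rdd (hAm i) ν (ν.map fun y => g⁻¹ • y) x) ∂ν)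
        atTop (𝓝 (∫ x, -Real.log (rdd hAinf ν (ν.map fun y => g⁻¹ • y) x) ∂ν)) ∧
      ∀ i, ∫ x, -Real.log (rdd hAinf ν (ν.map fun y => g⁻¹ • y) x) ∂ν
        ≤ ∫ x, -Real.log (rdd (hAm i) ν (ν.map fun y => g⁻¹ • y) x) ∂ν := by
    intro g
    obtain ⟨c, C, hc, hcC, hb1, hb2⟩ := map_bounds hmeas μ ν hstat hgen g
    haveI : IsProbabilityMeasure (ν.map fun y => g⁻¹ • y) :=
      Measure.isProbabilityMeasure_map (hmeas g⁻¹).aemeasurable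
    exact perg A hanti hAm hAinf ν (ν.map fun y => g⁻¹ • y) hc hcC hb1 hb2
  have htd : Tendsto (fun i => furstenbergEntropy (A i) (hAm i) μ ν) atTop
      (𝓝 (furstenbergEntropy (⨅ i, A i) ((iInf_le A 0).trans (hAm 0)) μ ν)) := by
    have hfun : (fun i => furstenbergEntropy (A i) (hAm i) μ ν)
        = fun i => ∑ g ∈ hfin.toFinset,
          (μ {g}).toReal * ∫ x, -Real.log (rdd (hAm i) ν (ν.map fun y => g⁻¹ • y) x) ∂ν :=
      funext fun i => hent (A i) (hAm i)
    rw [hfun, hent (⨅ i, A i) ((iInf_le A 0).trans (hAm 0))]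
    exact tendsto_finset_sum _ fun g _ => ((hper g).1).const_mul _
  have hle : ∀ i, furstenbergEntropy (⨅ i, A i) ((iInf_le A 0).trans (hAm 0)) μ ν
      ≤ furstenbergEntropy (A i) (hAm i) μ ν := by
    intro i
    rw [hent (⨅ i, A i) ((iInf_le A 0).trans (hAm 0)), hent (A i) (hAm i)]
    exact Finset.sum_le_sum fun g _ =>
      mul_le_mul_of_nonneg_left ((hper g).2 i) ENNReal.toReal_nonneg
  refine ⟨htd, ?_⟩
  have hbdd : BddBelow (Set.range fun i => furstenbergEntropy (A i) (hAm i) μ ν) :=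
    ⟨furstenbergEntropy (⨅ i, A i) ((iInf_le A 0).trans (hAm 0)) μ ν, by
      rintro _ ⟨i, rfl⟩; exact hle i⟩
  refine le_antisymm (le_ciInf hle) ?_
  exact ge_of_tendsto htd (Eventually.of_forall fun i => ciInf_le hbdd i)
end

section
/- Let d ≥ 2, let F_d be the free group on free generators a_1, …, a_d, and let μ be the uniform probability measure on the symmetric set {a_1^{±1}, …, a_d^{±1}} (each of the 2d elements has mass 1/(2d)). Then the Avez entropy of the simple random walk satisfies lim_{n→∞} H(μ^{*n})/n = ((d−1)/d) · log(2d−1). -/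
open MeasureTheory Filter Topology
open FreeGroup
open scoped ENNReal

/-- The Shannon entropy `H(ν) = ∑_g −ν({g}) log ν({g})` of a (finitely supported)
measure on a countable discrete space. -/
noncomputable def shannonEntropy {Γ : Type*} [MeasurableSpace Γ] (ν : Measure Γ) : ℝ :=
  ∑' g : Γ, -((ν {g}).toReal * Real.log (ν {g}).toReal)

namespace AvezAux

variable {α : Type*} [DecidableEq α]

instance instCountableFreeGroup [Countable α] : Countable (FreeGroup α) :=
  FreeGroup.toWord_injective.countable

/-- reduce of cons when the tail is reduced -/
lemma reduce_cons_of_reduced (x : α × Bool) {L : List (α × Bool)} (hL : reduce L = L) :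
    reduce (x :: L) = (match L with
      | [] => [x]
      | y :: t => if x.1 = y.1 ∧ x.2 = !y.2 then t else x :: y :: t) := by
  rw [reduce.cons, hL]
  cases L with
  | nil => rfl
  | cons y t => rfl

lemma reduced_cons_iff (x : α × Bool) {L : List (α × Bool)} (hL : reduce L = L) :
    reduce (x :: L) = x :: L ↔ (∀ y ∈ L.head?, ¬(x.1 = y.1 ∧ x.2 = !y.2)) := by
  rw [reduce_cons_of_reduced x hL]
  cases L with
  | nil => simp
  | cons y t =>
    simp only [List.head?_cons, Option.mem_some_iff, forall_eq]
    by_cases h : x.1 = y.1 ∧ x.2 = !y.2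
    · simp only [if_pos h, forall_eq']
      constructor
      · intro ht; exfalso
        have := congrArg List.length ht; simp at this; omega
      · intro hc; exact absurd h hc
    · simp only [if_neg h, forall_eq']
      tauto

lemma reduced_of_reduced_cons {x : α × Bool} {L : List (α × Bool)}
    (h : reduce (x :: L) = x :: L) : reduce L = L := by
  have hlen := FreeGroup.Red.length_le (reduce.red (L := L))
  rw [reduce.cons] at h
  rcases hM : reduce L with _ | ⟨y, ys⟩
  · rw [hM] at h
    have hL : L = [] := by
      have := congrArg List.tail h; simpa using this.symm
    simp [hL]
  · rw [hM] at h hlen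
    by_cases hc : x.1 = y.1 ∧ x.2 = !y.2
    · simp only [if_pos hc] at h
      exfalso
      have h2 := congrArg List.length h
      simp only [List.length_cons] at h2 hlen
      omega
    · simp only [if_neg hc] at h
      have hL : L = y :: ys := by
        have := congrArg List.tail h
        simpa using this.symm
      subst hL; rfl


lemma toWord_single_mul (x : α × Bool) (g : FreeGroup α) :
    (FreeGroup.mk [x] * g).toWord = reduce (x :: g.toWord) := by
  conv_lhs => rw [← FreeGroup.mk_toWord (x := g), FreeGroup.mul_mk]
  rw [FreeGroup.toWord_mk]
  rfl

lemma norm_single_mul (x : α × Bool) (g : FreeGroup α) :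
    (FreeGroup.mk [x] * g).norm = (match g.toWord with
      | [] => 1
      | y :: t => if x.1 = y.1 ∧ x.2 = !y.2 then t.length else t.length + 2) := by
  show (FreeGroup.mk [x] * g).toWord.length = _
  rw [toWord_single_mul]
  rcases hg : g.toWord with _ | ⟨y, t⟩
  · rfl
  · have hred : reduce (y :: t) = y :: t := by rw [← hg]; exact reduce_toWord g
    rw [reduce_cons_of_reduced x hred]
    by_cases h : x.1 = y.1 ∧ x.2 = !y.2
    · simp [h]
    · simp [h]

lemma of_eq_mk (a : α) : FreeGroup.of a = FreeGroup.mk [(a, true)] := rfl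

lemma inv_of_eq_mk (a : α) : (FreeGroup.of a)⁻¹ = FreeGroup.mk [(a, false)] := by
  rw [of_eq_mk, FreeGroup.inv_mk]
  simp [FreeGroup.invRev]

lemma sum_gens {d : ℕ} (hd : 1 ≤ d) (F : ℕ → ℝ≥0∞) (g : FreeGroup (Fin d)) :
    ∑ i : Fin d, (F ((FreeGroup.of i)⁻¹ * g).norm + F (FreeGroup.of i * g).norm) =
      if g = 1 then ((2 * d : ℕ) : ℝ≥0∞) * F 1
      else F (g.norm - 1) + ((2 * d - 1 : ℕ) : ℝ≥0∞) * F (g.norm + 1) := by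
  rcases hg : g.toWord with _ | ⟨⟨j, b⟩, t⟩
  · have hg1 : g = 1 := FreeGroup.toWord_eq_nil_iff.mp hg
    subst hg1
    rw [if_pos rfl]
    have h1 : ∀ i : Fin d, ((FreeGroup.of i)⁻¹ * 1 : FreeGroup (Fin d)).norm = 1 := by
      intro i; rw [mul_one, FreeGroup.norm_inv_eq, FreeGroup.norm_of]
    have h2 : ∀ i : Fin d, (FreeGroup.of i * 1 : FreeGroup (Fin d)).norm = 1 := by
      intro i; rw [mul_one, FreeGroup.norm_of]
    calc ∑ i : Fin d, (F ((FreeGroup.of i)⁻¹ * 1).norm + F (FreeGroup.of i * 1).norm)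
        = ∑ _i : Fin d, (F 1 + F 1) := by
          refine Finset.sum_congr rfl fun i _ => ?_; rw [h1 i, h2 i]
      _ = ((2 * d : ℕ) : ℝ≥0∞) * F 1 := by
          rw [Finset.sum_const, Finset.card_univ, Fintype.card_fin, nsmul_eq_mul]
          push_cast; ring
  · have hg1 : g ≠ 1 := by
      intro h; rw [h, FreeGroup.toWord_one] at hg; simp at hg
    rw [if_neg hg1]
    have hnorm : g.norm = t.length + 1 := by
      show g.toWord.length = _; rw [hg]; rfl
    have key : ∀ i : Fin d,
        F ((FreeGroup.of i)⁻¹ * g).norm + F (FreeGroup.of i * g).norm =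
        if i = j then F t.length + F (t.length + 2)
        else F (t.length + 2) + F (t.length + 2) := by
      intro i
      rw [inv_of_eq_mk, of_eq_mk, norm_single_mul, norm_single_mul, hg]
      by_cases hij : i = j
      · subst hij
        cases b
        · simp [add_comm]
        · simp
      · have h1 : ¬((i, false).1 = (j, b).1 ∧ (i, false).2 = !(j, b).2) := by
          simp [hij]
        have h2 : ¬((i, true).1 = (j, b).1 ∧ (i, true).2 = !(j, b).2) := by
          simp [hij]
        simp only [if_neg h1, if_neg h2, if_neg hij]
    rw [Finset.sum_congr rfl fun i _ => key i]
    rw [← Finset.sum_erase_add _ _ (Finset.mem_univ j), if_pos rfl]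
    rw [Finset.sum_congr rfl fun i hi => if_neg (Finset.ne_of_mem_erase hi)]
    rw [Finset.sum_const, Finset.card_erase_of_mem (Finset.mem_univ j),
      Finset.card_univ, Fintype.card_fin, hnorm]
    have h21 : (2 * d - 1 : ℕ) = (d - 1) * 2 + 1 := by omega
    rw [h21]
    simp only [Nat.add_sub_cancel, nsmul_eq_mul]
    push_cast
    ring


section Spheres

variable {d : ℕ}

/-- letters that can be prepended to `L` keeping it reduced -/
def allowed (L : List (Fin d × Bool)) : Finset (Fin d × Bool) :=
  Finset.univ.filter (fun x => reduce (x :: L) = x :: L)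

/-- reduced words of length `k` -/
def W (d : ℕ) : ℕ → Finset (List (Fin d × Bool))
  | 0 => {[]}
  | k + 1 => (W d k).biUnion (fun L => (allowed L).image (· :: L))

lemma mem_W : ∀ (k : ℕ) (L : List (Fin d × Bool)),
    L ∈ W d k ↔ (reduce L = L ∧ L.length = k)
  | 0, L => by
    constructor
    · intro h
      have : L = [] := by simpa [W] using h
      subst this; exact ⟨rfl, rfl⟩
    · rintro ⟨h1, h2⟩
      have : L = [] := List.length_eq_zero_iff.mp h2
      subst this; simp [W]
  | k + 1, L => by
    simp only [W, Finset.mem_biUnion, Finset.mem_image]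
    constructor
    · rintro ⟨L', hL', x, hx, rfl⟩
      have hx' : reduce (x :: L') = x :: L' := by
        exact (Finset.mem_filter.mp hx).2
      refine ⟨hx', ?_⟩
      simp [((mem_W k L').mp hL').2]
    · rintro ⟨h1, h2⟩
      rcases L with _ | ⟨x, L'⟩
      · exact absurd h2 (by simp)
      · refine ⟨L', ?_, x, ?_, rfl⟩
        · refine (mem_W k L').mpr ⟨reduced_of_reduced_cons h1, ?_⟩
          simpa using h2
        · exact Finset.mem_filter.mpr ⟨Finset.mem_univ _, h1⟩

lemma card_allowed_nil : (allowed ([] : List (Fin d × Bool))).card = 2 * d := by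
  have : allowed ([] : List (Fin d × Bool)) = Finset.univ := by
    apply Finset.filter_true_of_mem
    intro x _
    rfl
  rw [this, Finset.card_univ, Fintype.card_prod, Fintype.card_fin, Fintype.card_bool]
  omega

lemma card_allowed_cons {y : Fin d × Bool} {t : List (Fin d × Bool)}
    (h : reduce (y :: t) = y :: t) :
    (allowed (y :: t)).card = 2 * d - 1 := by
  have : allowed (y :: t) = Finset.univ.erase (y.1, !y.2) := by
    ext x
    simp only [allowed, Finset.mem_filter, Finset.mem_univ, true_and,
      Finset.mem_erase, and_true]
    rw [reduced_cons_iff x h]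
    simp only [List.head?_cons, Option.mem_some_iff, forall_eq']
    constructor
    · intro hc hx
      exact hc ⟨by rw [hx], by rw [hx]⟩
    · intro hx hc
      exact hx (Prod.ext hc.1 (by simpa using hc.2))
  rw [this, Finset.card_erase_of_mem (Finset.mem_univ _), Finset.card_univ,
    Fintype.card_prod, Fintype.card_fin, Fintype.card_bool]
  omega

/-- number of elements of norm `k` -/
def Nn (d : ℕ) (k : ℕ) : ℕ := if k = 0 then 1 else 2 * d * (2 * d - 1) ^ (k - 1)

lemma W_disjoint (k : ℕ) : ∀ L1 ∈ W d k, ∀ L2 ∈ W d k, L1 ≠ L2 →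
    Disjoint ((allowed L1).image (· :: L1)) ((allowed L2).image (· :: L2)) := by
  intro L1 h1 L2 h2 hne
  apply Finset.disjoint_left.mpr
  rintro a ha hb
  simp only [Finset.mem_image] at ha hb
  obtain ⟨x1, _, rfl⟩ := ha
  obtain ⟨x2, _, heq⟩ := hb
  have h2' := congrArg List.tail heq
  simp only [List.tail_cons] at h2'
  exact hne h2'.symm

lemma card_W_succ (k : ℕ) :
    (W d (k+1)).card = ∑ L ∈ W d k, (allowed L).card := by
  rw [show W d (k+1) = (W d k).biUnion (fun L => (allowed L).image (· :: L)) from rfl]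
  rw [Finset.card_biUnion (W_disjoint k)]
  refine Finset.sum_congr rfl fun L _ => ?_
  apply Finset.card_image_of_injective
  intro a b hab
  exact (List.cons.injEq _ _ _ _ ▸ hab).1

lemma card_W : ∀ k : ℕ, (W d k).card = Nn d k
  | 0 => by simp [W, Nn]
  | 1 => by
    rw [card_W_succ 0]
    rw [show (W d 0) = {([] : List (Fin d × Bool))} from rfl]
    rw [Finset.sum_singleton, card_allowed_nil]
    simp [Nn]
  | (m + 2) => by
    rw [card_W_succ (m+1)]
    have hc : ∀ L ∈ W d (m+1), (allowed L).card = 2 * d - 1 := by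
      intro L hL
      obtain ⟨h1, h2⟩ := (mem_W _ L).mp hL
      rcases L with _ | ⟨y, t⟩
      · exact absurd h2 (by simp)
      · exact card_allowed_cons h1
    rw [Finset.sum_congr rfl hc, Finset.sum_const, card_W (m+1), smul_eq_mul]
    simp only [Nn, Nat.add_eq_zero, and_false, if_false, Nat.add_sub_cancel,
      Nat.succ_ne_zero]
    rw [show m + 2 - 1 = m + 1 from by omega]
    ring

/-- the sphere of radius `k` in the free group, as a `Finset` -/
def SG (d : ℕ) (k : ℕ) : Finset (FreeGroup (Fin d)) := (W d k).image FreeGroup.mk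

lemma mem_SG {k : ℕ} {g : FreeGroup (Fin d)} : g ∈ SG d k ↔ g.norm = k := by
  constructor
  · intro h
    obtain ⟨L, hL, rfl⟩ := Finset.mem_image.mp h
    obtain ⟨h1, h2⟩ := (mem_W k L).mp hL
    show (FreeGroup.mk L).toWord.length = k
    rw [FreeGroup.toWord_mk, h1, h2]
  · intro h
    apply Finset.mem_image.mpr
    refine ⟨g.toWord, (mem_W k g.toWord).mpr ⟨reduce_toWord g, h⟩, FreeGroup.mk_toWord⟩

lemma card_SG (k : ℕ) : (SG d k).card = Nn d k := by
  rw [SG, Finset.card_image_of_injOn, card_W]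
  intro L1 h1 L2 h2 heq
  have := FreeGroup.reduce.sound heq
  rwa [((mem_W k L1).mp h1).1, ((mem_W k L2).mp h2).1] at this

lemma tsum_norm_eq_sum {M : Type*} [AddCommMonoid M] [TopologicalSpace M] [T2Space M]
    (u : ℕ → M) (n : ℕ) (hu : ∀ k, n < k → u k = 0) :
    ∑' g : FreeGroup (Fin d), u g.norm
      = ∑ k ∈ Finset.range (n + 1), (Nn d k) • u k := by
  have h0 : ∀ g ∉ (Finset.range (n+1)).biUnion (SG d),
      u (FreeGroup.norm g) = 0 := by
    intro g hg
    apply hu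
    by_contra hle
    push_neg at hle
    exact hg (Finset.mem_biUnion.mpr ⟨g.norm, Finset.mem_range.mpr (by omega),
      mem_SG.mpr rfl⟩)
  have hdisj : ∀ k1 ∈ Finset.range (n+1), ∀ k2 ∈ Finset.range (n+1), k1 ≠ k2 →
      Disjoint (SG d k1) (SG d k2) := by
    intro k1 h1 k2 h2 hne
    apply Finset.disjoint_left.mpr
    intro g hg1 hg2
    exact hne (by rw [← mem_SG.mp hg1, mem_SG.mp hg2])
  rw [tsum_eq_sum h0, Finset.sum_biUnion hdisj]
  refine Finset.sum_congr rfl fun k hk => ?_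
  have : ∀ g ∈ SG d k, u g.norm = u k := fun g hg => by rw [mem_SG.mp hg]
  rw [Finset.sum_congr rfl this, Finset.sum_const, card_SG]

end Spheres


section FF

/-- the radial density of the `n`-step distribution -/
noncomputable def ff (d : ℕ) : ℕ → ℕ → ℝ≥0∞
  | 0, 0 => 1
  | 0, _ + 1 => 0
  | n + 1, 0 => ff d n 1
  | n + 1, k + 1 =>
      ((2 * d : ℕ) : ℝ≥0∞)⁻¹ * (ff d n k + ((2 * d - 1 : ℕ) : ℝ≥0∞) * ff d n (k + 2))

variable {d : ℕ}

lemma ff_zero_of_lt : ∀ n k : ℕ, n < k → ff d n k = 0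
  | 0, k + 1, _ => rfl
  | n + 1, k + 1, h => by
    show ((2 * d : ℕ) : ℝ≥0∞)⁻¹ * (ff d n k + ((2 * d - 1 : ℕ) : ℝ≥0∞) * ff d n (k + 2)) = 0
    rw [ff_zero_of_lt n k (by omega), ff_zero_of_lt n (k + 2) (by omega)]
    simp

lemma ff_succ_norm (hd : 1 ≤ d) (n : ℕ) (g : FreeGroup (Fin d)) :
    ff d (n + 1) g.norm = ((2 * d : ℕ) : ℝ≥0∞)⁻¹ *
      ∑ i : Fin d, (ff d n ((FreeGroup.of i)⁻¹ * g).norm + ff d n (FreeGroup.of i * g).norm) := by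
  have h2d0 : ((2 * d : ℕ) : ℝ≥0∞) ≠ 0 := by
    simp only [ne_eq, Nat.cast_eq_zero]; omega
  have h2dt : ((2 * d : ℕ) : ℝ≥0∞) ≠ ⊤ := ENNReal.natCast_ne_top _
  rw [sum_gens hd (ff d n) g]
  by_cases hg : g = 1
  · subst hg
    rw [if_pos rfl, FreeGroup.norm_one]
    show ff d n 1 = _
    rw [← mul_assoc, ENNReal.inv_mul_cancel h2d0 h2dt, one_mul]
  · rw [if_neg hg]
    obtain ⟨k, hk⟩ : ∃ k, g.norm = k + 1 := by
      have : g.norm ≠ 0 := fun h => hg (FreeGroup.norm_eq_zero.mp h)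
      exact ⟨g.norm - 1, by omega⟩
    rw [hk]
    rfl

/-- master recursion for radial sums -/
lemma master (hd : 1 ≤ d) (n : ℕ) (w : ℕ → ℝ≥0∞) :
    ∑' g : FreeGroup (Fin d), ff d (n + 1) g.norm * w g.norm
      = ((2 * d : ℕ) : ℝ≥0∞)⁻¹ * ∑' h : FreeGroup (Fin d), ff d n h.norm *
          (if h = 1 then ((2 * d : ℕ) : ℝ≥0∞) * w 1
           else w (h.norm - 1) + ((2 * d - 1 : ℕ) : ℝ≥0∞) * w (h.norm + 1)) := by
  have reindex1 : ∀ i : Fin d,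
      ∑' g : FreeGroup (Fin d), ff d n ((FreeGroup.of i)⁻¹ * g).norm * w g.norm
        = ∑' h : FreeGroup (Fin d), ff d n h.norm * w (FreeGroup.of i * h).norm := by
    intro i
    rw [← (Equiv.mulLeft (FreeGroup.of i)).tsum_eq
      (f := fun g => ff d n ((FreeGroup.of i)⁻¹ * g).norm * w g.norm)]
    refine tsum_congr fun h => ?_
    simp [Equiv.coe_mulLeft, inv_mul_cancel_left]
  have reindex2 : ∀ i : Fin d,
      ∑' g : FreeGroup (Fin d), ff d n (FreeGroup.of i * g).norm * w g.norm
        = ∑' h : FreeGroup (Fin d), ff d n h.norm * w ((FreeGroup.of i)⁻¹ * h).norm := by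
    intro i
    rw [← (Equiv.mulLeft (FreeGroup.of i)⁻¹).tsum_eq
      (f := fun g => ff d n (FreeGroup.of i * g).norm * w g.norm)]
    refine tsum_congr fun h => ?_
    simp [Equiv.coe_mulLeft, mul_inv_cancel_left]
  calc ∑' g : FreeGroup (Fin d), ff d (n + 1) g.norm * w g.norm
      = ∑' g : FreeGroup (Fin d), ((2 * d : ℕ) : ℝ≥0∞)⁻¹ *
          ∑ i : Fin d, (ff d n ((FreeGroup.of i)⁻¹ * g).norm * w g.norm
            + ff d n (FreeGroup.of i * g).norm * w g.norm) := by
        refine tsum_congr fun g => ?_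
        rw [ff_succ_norm hd n g, mul_assoc, Finset.sum_mul]
        congr 1
        refine Finset.sum_congr rfl fun i _ => ?_
        rw [add_mul]
    _ = ((2 * d : ℕ) : ℝ≥0∞)⁻¹ * ∑ i : Fin d,
          (∑' g : FreeGroup (Fin d), ff d n ((FreeGroup.of i)⁻¹ * g).norm * w g.norm
            + ∑' g : FreeGroup (Fin d), ff d n (FreeGroup.of i * g).norm * w g.norm) := by
        rw [ENNReal.tsum_mul_left]
        congr 1
        rw [Summable.tsum_finsetSum (fun i _ => ENNReal.summable)]
        refine Finset.sum_congr rfl fun i _ => ?_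
        exact Summable.tsum_add ENNReal.summable ENNReal.summable
    _ = ((2 * d : ℕ) : ℝ≥0∞)⁻¹ * ∑ i : Fin d,
          (∑' h : FreeGroup (Fin d), (ff d n h.norm * w ((FreeGroup.of i)⁻¹ * h).norm
            + ff d n h.norm * w (FreeGroup.of i * h).norm)) := by
        congr 1
        refine Finset.sum_congr rfl fun i _ => ?_
        rw [reindex1 i, reindex2 i, ← Summable.tsum_add ENNReal.summable ENNReal.summable]
        refine tsum_congr fun h => ?_
        ring
    _ = ((2 * d : ℕ) : ℝ≥0∞)⁻¹ * ∑' h : FreeGroup (Fin d), ff d n h.norm *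
          ∑ i : Fin d, (w ((FreeGroup.of i)⁻¹ * h).norm + w (FreeGroup.of i * h).norm) := by
        congr 1
        rw [← Summable.tsum_finsetSum (fun i _ => ENNReal.summable)]
        refine tsum_congr fun h => ?_
        rw [Finset.mul_sum]
        refine Finset.sum_congr rfl fun i _ => ?_
        rw [mul_add]
    _ = _ := by
        congr 1
        refine tsum_congr fun h => ?_
        rw [sum_gens hd w h]

lemma mass (hd : 1 ≤ d) : ∀ n : ℕ, ∑' g : FreeGroup (Fin d), ff d n g.norm = 1 := by
  have h2d0 : ((2 * d : ℕ) : ℝ≥0∞) ≠ 0 := by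
    simp only [ne_eq, Nat.cast_eq_zero]; omega
  have h2dt : ((2 * d : ℕ) : ℝ≥0∞) ≠ ⊤ := ENNReal.natCast_ne_top _
  intro n
  induction n with
  | zero =>
    rw [tsum_eq_single (1 : FreeGroup (Fin d)) ?_]
    · rw [FreeGroup.norm_one]; rfl
    · intro g hg
      obtain ⟨k, hk⟩ : ∃ k, g.norm = k + 1 := by
        have : g.norm ≠ 0 := fun h => hg (FreeGroup.norm_eq_zero.mp h)
        exact ⟨g.norm - 1, by omega⟩
      rw [hk]; rfl
  | succ n ih =>
    have key := master hd n (fun _ => 1)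
    simp only [mul_one] at key
    have hcoef : ∀ h : FreeGroup (Fin d),
        (if h = (1 : FreeGroup (Fin d)) then ((2 * d : ℕ) : ℝ≥0∞)
         else 1 + ((2 * d - 1 : ℕ) : ℝ≥0∞)) = ((2 * d : ℕ) : ℝ≥0∞) := by
      intro h
      split
      · rfl
      · rw [← Nat.cast_one, ← Nat.cast_add, Nat.cast_inj]
        omega
    rw [key]
    have : ∑' h : FreeGroup (Fin d), ff d n h.norm *
        (if h = (1 : FreeGroup (Fin d)) then ((2 * d : ℕ) : ℝ≥0∞)
         else 1 + ((2 * d - 1 : ℕ) : ℝ≥0∞))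
        = ∑' h : FreeGroup (Fin d), ff d n h.norm * ((2 * d : ℕ) : ℝ≥0∞) :=
      tsum_congr fun h => by rw [hcoef h]
    rw [this, ENNReal.tsum_mul_right, ih, one_mul,
      ENNReal.inv_mul_cancel h2d0 h2dt]

lemma ff_le_one (hd : 1 ≤ d) (n k : ℕ) : ff d n k ≤ 1 := by
  by_cases hk : n < k
  · rw [ff_zero_of_lt n k hk]; exact zero_le_one
  · -- find an element of norm k
    obtain ⟨g, hg⟩ : ∃ g : FreeGroup (Fin d), g.norm = k := by
      have h1 : 1 ≤ Nn d k := by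
        rcases k with _ | m
        · simp [Nn]
        · have h3 : 0 < (2 * d - 1) ^ m := pow_pos (by omega) m
          have : 0 < 2 * d * (2 * d - 1) ^ m := Nat.mul_pos (by omega) h3
          simp [Nn]; omega
      have := card_SG (d := d) k
      obtain ⟨g, hg⟩ := Finset.card_pos.mp (by omega : 0 < (SG d k).card)
      exact ⟨g, mem_SG.mp hg⟩
    calc ff d n k = ff d n g.norm := by rw [hg]
      _ ≤ ∑' g : FreeGroup (Fin d), ff d n g.norm := ENNReal.le_tsum g
      _ = 1 := mass hd n


/-- expected word length at time `n` -/
noncomputable def Esum (d n : ℕ) : ℝ≥0∞ :=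
  ∑' g : FreeGroup (Fin d), ff d n g.norm * (g.norm : ℝ≥0∞)

/-- exponential moment `E[θ^{|X_n|}]` with `θ = 1/d` -/
noncomputable def Gsum (d n : ℕ) : ℝ≥0∞ :=
  ∑' g : FreeGroup (Fin d), ff d n g.norm * ((d : ℝ≥0∞))⁻¹ ^ g.norm

noncomputable def rho (d : ℕ) : ℝ≥0∞ :=
  ((2 * d : ℕ) : ℝ≥0∞)⁻¹ * ((d : ℝ≥0∞) + ((2 * d - 1 : ℕ) : ℝ≥0∞) * (d : ℝ≥0∞)⁻¹)

lemma norm_succ_of_ne_one {g : FreeGroup (Fin d)} (hg : g ≠ 1) :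
    ∃ m, g.norm = m + 1 := by
  have : g.norm ≠ 0 := fun h => hg (FreeGroup.norm_eq_zero.mp h)
  exact ⟨g.norm - 1, by omega⟩

lemma Esum_zero : Esum d 0 = 0 := by
  unfold Esum
  rw [tsum_eq_single (1 : FreeGroup (Fin d)) ?_]
  · rw [FreeGroup.norm_one]; simp
  · intro g hg
    obtain ⟨m, hm⟩ := norm_succ_of_ne_one hg
    rw [hm]
    show (0 : ℝ≥0∞) * _ = 0
    rw [zero_mul]

lemma Esum_le (hd : 1 ≤ d) (n : ℕ) : Esum d n ≤ n := by
  have : Esum d n ≤ ∑' g : FreeGroup (Fin d), ff d n g.norm * (n : ℝ≥0∞) := by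
    refine ENNReal.tsum_le_tsum fun g => ?_
    by_cases h : g.norm ≤ n
    · exact mul_le_mul_right (by exact_mod_cast Nat.cast_le.mpr h) _
    · rw [ff_zero_of_lt n g.norm (by omega), zero_mul]
      exact zero_le
  rw [ENNReal.tsum_mul_right, mass hd n, one_mul] at this
  exact this

lemma Esum_succ (hd : 1 ≤ d) (n : ℕ) :
    Esum d (n + 1) = Esum d n + ((2 * d : ℕ) : ℝ≥0∞)⁻¹ * ((2 * d - 2 : ℕ) : ℝ≥0∞)
      + ((2 * d : ℕ) : ℝ≥0∞)⁻¹ * (2 * ff d n 0) := by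
  obtain ⟨e, rfl⟩ : ∃ e, d = e + 1 := ⟨d - 1, by omega⟩
  have h2d0 : ((2 * (e+1) : ℕ) : ℝ≥0∞) ≠ 0 := by
    simp only [ne_eq, Nat.cast_eq_zero]; omega
  have h2dt : ((2 * (e+1) : ℕ) : ℝ≥0∞) ≠ ⊤ := ENNReal.natCast_ne_top _
  have key := master hd n (fun k => (k : ℝ≥0∞))
  have point : ∀ h : FreeGroup (Fin (e+1)), ff (e+1) n h.norm *
      (if h = 1 then ((2 * (e+1) : ℕ) : ℝ≥0∞) * ((1 : ℕ) : ℝ≥0∞)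
       else ((h.norm - 1 : ℕ) : ℝ≥0∞) + ((2 * (e+1) - 1 : ℕ) : ℝ≥0∞) * ((h.norm + 1 : ℕ) : ℝ≥0∞))
      = ff (e+1) n h.norm * ((2 * (e+1) * h.norm + (2 * (e+1) - 2) : ℕ) : ℝ≥0∞)
        + (if h = 1 then 2 * ff (e+1) n 0 else 0) := by
    intro h
    by_cases hh : h = 1
    · subst hh
      rw [if_pos rfl, if_pos rfl, FreeGroup.norm_one]
      rw [show (2 * (e+1) * 0 + (2 * (e+1) - 2) : ℕ) = 2 * (e+1) - 2 from by omega]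
      rw [Nat.cast_one, mul_one]
      rw [mul_comm (2 : ℝ≥0∞) (ff (e+1) n 0), ← mul_add]
      congr 1
      rw [show (2 : ℝ≥0∞) = ((2:ℕ) : ℝ≥0∞) from by norm_cast, ← Nat.cast_add,
        Nat.cast_inj]
      omega
    · obtain ⟨m, hm⟩ := norm_succ_of_ne_one hh
      rw [if_neg hh, if_neg hh, add_zero, hm]
      congr 1
      rw [show (m + 1 - 1 : ℕ) = m from by omega]
      rw [show (2 * (e+1) - 1 : ℕ) = 2 * e + 1 from by omega]
      rw [show (2 * (e+1) - 2 : ℕ) = 2 * e from by omega]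
      push_cast
      ring
  rw [show Esum (e+1) (n+1) = ∑' g : FreeGroup (Fin (e+1)), ff (e+1) (n+1) g.norm * (g.norm : ℝ≥0∞)
    from rfl, key]
  rw [tsum_congr point, Summable.tsum_add ENNReal.summable ENNReal.summable]
  have hsingle : ∑' h : FreeGroup (Fin (e+1)), (if h = 1 then 2 * ff (e+1) n 0 else 0)
      = 2 * ff (e+1) n 0 := by
    rw [tsum_eq_single (1 : FreeGroup (Fin (e+1))) (fun g hg => if_neg hg), if_pos rfl]
  have hsplit : ∑' h : FreeGroup (Fin (e+1)),
      ff (e+1) n h.norm * ((2 * (e+1) * h.norm + (2 * (e+1) - 2) : ℕ) : ℝ≥0∞)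
      = ((2 * (e+1) : ℕ) : ℝ≥0∞) * Esum (e+1) n + ((2 * (e+1) - 2 : ℕ) : ℝ≥0∞) := by
    have : ∀ h : FreeGroup (Fin (e+1)),
        ff (e+1) n h.norm * ((2 * (e+1) * h.norm + (2 * (e+1) - 2) : ℕ) : ℝ≥0∞)
        = ((2 * (e+1) : ℕ) : ℝ≥0∞) * (ff (e+1) n h.norm * (h.norm : ℝ≥0∞))
          + ff (e+1) n h.norm * ((2 * (e+1) - 2 : ℕ) : ℝ≥0∞) := by
      intro h
      push_cast
      ring
    rw [tsum_congr this, Summable.tsum_add ENNReal.summable ENNReal.summable,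
      ENNReal.tsum_mul_left, ENNReal.tsum_mul_right, mass hd n, one_mul]
    rfl
  rw [hsingle, hsplit, mul_add, mul_add, ← mul_assoc,
    ENNReal.inv_mul_cancel h2d0 h2dt, one_mul]

lemma Gsum_zero : Gsum d 0 = 1 := by
  unfold Gsum
  rw [tsum_eq_single (1 : FreeGroup (Fin d)) ?_]
  · rw [FreeGroup.norm_one, pow_zero, mul_one]; rfl
  · intro g hg
    obtain ⟨m, hm⟩ := norm_succ_of_ne_one hg
    rw [hm]
    show (0 : ℝ≥0∞) * _ = 0
    rw [zero_mul]

lemma Gsum_succ_le (hd : 2 ≤ d) (n : ℕ) : Gsum d (n + 1) ≤ rho d * Gsum d n := by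
  have hd1 : 1 ≤ d := by omega
  have hd0 : (d : ℝ≥0∞) ≠ 0 := by simp only [ne_eq, Nat.cast_eq_zero]; omega
  have hdt : (d : ℝ≥0∞) ≠ ⊤ := ENNReal.natCast_ne_top _
  set θ : ℝ≥0∞ := ((d : ℝ≥0∞))⁻¹ with hθ
  set ρ0 : ℝ≥0∞ := (d : ℝ≥0∞) + ((2 * d - 1 : ℕ) : ℝ≥0∞) * θ with hρ0
  have hdθ : (d : ℝ≥0∞) * θ = 1 := ENNReal.mul_inv_cancel hd0 hdt
  have key := master hd1 n (fun k => θ ^ k)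
  have point : ∀ h : FreeGroup (Fin d),
      ff d n h.norm * (if h = 1 then ((2 * d : ℕ) : ℝ≥0∞) * θ ^ 1
        else θ ^ (h.norm - 1) + ((2 * d - 1 : ℕ) : ℝ≥0∞) * θ ^ (h.norm + 1))
      ≤ ff d n h.norm * (ρ0 * θ ^ h.norm) := by
    intro h
    refine mul_le_mul_right ?_ _
    by_cases hh : h = 1
    · subst hh
      rw [if_pos rfl, FreeGroup.norm_one, pow_zero, mul_one, pow_one]
      have h2 : ((2 * d : ℕ) : ℝ≥0∞) * θ = 2 := by
        rw [show ((2 * d : ℕ) : ℝ≥0∞) = 2 * (d : ℝ≥0∞) from by push_cast; ring,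
          mul_assoc, hdθ, mul_one]
      rw [h2, hρ0]
      calc (2 : ℝ≥0∞) ≤ (d : ℝ≥0∞) := by
            rw [show (2 : ℝ≥0∞) = ((2:ℕ) : ℝ≥0∞) from by norm_cast]
            exact Nat.cast_le.mpr hd
        _ ≤ _ := le_self_add
    · obtain ⟨m, hm⟩ := norm_succ_of_ne_one hh
      rw [if_neg hh, hm]
      apply le_of_eq
      have e1 : θ ^ m = (d : ℝ≥0∞) * θ ^ (m + 1) := by
        rw [pow_succ', ← mul_assoc, hdθ, one_mul]
      have e2 : θ ^ (m + 1 + 1) = θ * θ ^ (m + 1) := by rw [pow_succ']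
      rw [show (m + 1 - 1 : ℕ) = m from by omega, e1, e2, hρ0]
      ring
  calc Gsum d (n + 1) = ((2 * d : ℕ) : ℝ≥0∞)⁻¹ * ∑' h : FreeGroup (Fin d),
        ff d n h.norm * (if h = 1 then ((2 * d : ℕ) : ℝ≥0∞) * θ ^ 1
          else θ ^ (h.norm - 1) + ((2 * d - 1 : ℕ) : ℝ≥0∞) * θ ^ (h.norm + 1)) := key
    _ ≤ ((2 * d : ℕ) : ℝ≥0∞)⁻¹ * ∑' h : FreeGroup (Fin d),
        ff d n h.norm * (ρ0 * θ ^ h.norm) :=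
      mul_le_mul_right (ENNReal.tsum_le_tsum point) _
    _ = rho d * Gsum d n := by
      have : ∀ h : FreeGroup (Fin d), ff d n h.norm * (ρ0 * θ ^ h.norm)
          = ρ0 * (ff d n h.norm * θ ^ h.norm) := fun h => by ring
      rw [tsum_congr this, ENNReal.tsum_mul_left, rho, mul_assoc]
      rfl

lemma Gsum_le_rho_pow (hd : 2 ≤ d) : ∀ n, Gsum d n ≤ rho d ^ n
  | 0 => by rw [Gsum_zero, pow_zero]
  | n + 1 => by
    calc Gsum d (n + 1) ≤ rho d * Gsum d n := Gsum_succ_le hd n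
      _ ≤ rho d * rho d ^ n := mul_le_mul_right (Gsum_le_rho_pow hd n) _
      _ = rho d ^ (n + 1) := by rw [pow_succ']

lemma ff_zero_le_rho_pow (hd : 2 ≤ d) (n : ℕ) : ff d n 0 ≤ rho d ^ n := by
  refine le_trans ?_ (Gsum_le_rho_pow hd n)
  have := ENNReal.le_tsum (f := fun g : FreeGroup (Fin d) =>
    ff d n g.norm * ((d : ℝ≥0∞))⁻¹ ^ g.norm) 1
  rwa [FreeGroup.norm_one, pow_zero, mul_one] at this

lemma rho_lt_one (hd : 2 ≤ d) : rho d < 1 := by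
  have hd0 : (d : ℝ≥0∞) ≠ 0 := by simp only [ne_eq, Nat.cast_eq_zero]; omega
  have hdt : (d : ℝ≥0∞) ≠ ⊤ := ENNReal.natCast_ne_top _
  have h2d0 : ((2 * d : ℕ) : ℝ≥0∞) ≠ 0 := by
    simp only [ne_eq, Nat.cast_eq_zero]; omega
  have h2dt : ((2 * d : ℕ) : ℝ≥0∞) ≠ ⊤ := ENNReal.natCast_ne_top _
  have hlt : ((2 * d - 1 : ℕ) : ℝ≥0∞) * (d : ℝ≥0∞)⁻¹ < (d : ℝ≥0∞) := by
    have hnat : (2 * d - 1 : ℕ) < d * d := by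
      have : 2 * d ≤ d * d := Nat.mul_le_mul_right d hd
      omega
    have hcast : ((2 * d - 1 : ℕ) : ℝ≥0∞) < (d : ℝ≥0∞) * (d : ℝ≥0∞) := by
      rw [← Nat.cast_mul]
      exact_mod_cast hnat
    have hinv0 : ((d : ℝ≥0∞))⁻¹ ≠ 0 := ENNReal.inv_ne_zero.mpr hdt
    have hinvt : ((d : ℝ≥0∞))⁻¹ ≠ ⊤ := ENNReal.inv_ne_top.mpr hd0
    calc ((2 * d - 1 : ℕ) : ℝ≥0∞) * (d : ℝ≥0∞)⁻¹
        < ((d : ℝ≥0∞) * (d : ℝ≥0∞)) * (d : ℝ≥0∞)⁻¹ := by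
          exact ENNReal.mul_lt_mul_left hinv0 hinvt hcast
      _ = (d : ℝ≥0∞) := by
          rw [mul_assoc, ENNReal.mul_inv_cancel hd0 hdt, mul_one]
  have hsum : (d : ℝ≥0∞) + ((2 * d - 1 : ℕ) : ℝ≥0∞) * (d : ℝ≥0∞)⁻¹
      < ((2 * d : ℕ) : ℝ≥0∞) := by
    have : ((2 * d : ℕ) : ℝ≥0∞) = (d : ℝ≥0∞) + (d : ℝ≥0∞) := by push_cast; ring
    rw [this]
    exact ENNReal.add_lt_add_left hdt hlt
  calc rho d < ((2 * d : ℕ) : ℝ≥0∞)⁻¹ * ((2 * d : ℕ) : ℝ≥0∞) := by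
        rw [rho]
        exact ENNReal.mul_lt_mul_right (ENNReal.inv_ne_zero.mpr h2dt)
          (ENNReal.inv_ne_top.mpr h2d0) hsum
    _ = 1 := ENNReal.inv_mul_cancel h2d0 h2dt

end FF


section Meas

variable {d : ℕ} [MeasurableSpace (FreeGroup (Fin d))]
  [MeasurableSingletonClass (FreeGroup (Fin d))]

lemma convPow_key (hd : 2 ≤ d) (μ : Measure (FreeGroup (Fin d)))
    (hμ : μ = (2 * (d : ENNReal))⁻¹ •
      ∑ i : Fin d, (Measure.dirac (FreeGroup.of i) + Measure.dirac (FreeGroup.of i)⁻¹)) :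
    ∀ n : ℕ, IsProbabilityMeasure (convPow μ n) ∧
      ∀ g : FreeGroup (Fin d), convPow μ n {g} = ff d n g.norm := by
  have hd1 : 1 ≤ d := by omega
  have h2d0 : (2 * (d : ENNReal)) ≠ 0 := by
    simp only [ne_eq, mul_eq_zero, Nat.cast_eq_zero]
    push_neg
    exact ⟨two_ne_zero, by omega⟩
  have h2dt : (2 * (d : ENNReal)) ≠ ⊤ := by
    refine ENNReal.mul_ne_top (by simp) (ENNReal.natCast_ne_top d)
  have hcast : ((2 * d : ℕ) : ℝ≥0∞) = 2 * (d : ENNReal) := by push_cast; ring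
  have hmul : Measurable (fun p : FreeGroup (Fin d) × FreeGroup (Fin d) => p.1 * p.2) :=
    measurable_of_countable _
  have hμ_prob : IsProbabilityMeasure μ := by
    constructor
    rw [hμ, Measure.smul_apply, Measure.finset_sum_apply]
    have : ∀ i ∈ (Finset.univ : Finset (Fin d)),
        (Measure.dirac (FreeGroup.of i) + Measure.dirac (FreeGroup.of i)⁻¹)
          (Set.univ : Set (FreeGroup (Fin d))) = 2 := by
      intro i _
      rw [Measure.add_apply, Measure.dirac_apply_of_mem (Set.mem_univ _),
        Measure.dirac_apply_of_mem (Set.mem_univ _)]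
      norm_num
    rw [Finset.sum_congr rfl this, Finset.sum_const, Finset.card_univ, Fintype.card_fin,
      smul_eq_mul, nsmul_eq_mul]
    rw [show (d : ℝ≥0∞) * 2 = 2 * (d : ENNReal) from by ring]
    exact ENNReal.inv_mul_cancel h2d0 h2dt
  intro n
  induction n with
  | zero =>
    constructor
    · show IsProbabilityMeasure (Measure.dirac (1 : FreeGroup (Fin d)))
      infer_instance
    · intro g
      show Measure.dirac (1 : FreeGroup (Fin d)) {g} = ff d 0 g.norm
      by_cases hg : g = 1
      · subst hg
        rw [Measure.dirac_apply_of_mem (Set.mem_singleton _), FreeGroup.norm_one]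
        rfl
      · rw [Measure.dirac_apply, Set.indicator_of_notMem
          (by simp [Ne.symm hg]), ]
        obtain ⟨m, hm⟩ := norm_succ_of_ne_one hg
        rw [hm]
        rfl
  | succ n ih =>
    obtain ⟨ihP, ihA⟩ := ih
    haveI := ihP
    haveI := hμ_prob
    have hmap : convPow μ (n + 1)
        = (μ.prod (convPow μ n)).map (fun p => p.1 * p.2) := rfl
    constructor
    · rw [hmap]
      exact Measure.isProbabilityMeasure_map hmul.aemeasurable
    · intro g
      rw [hmap, Measure.map_apply hmul (measurableSet_singleton g),
        Measure.prod_apply (hmul (measurableSet_singleton g))]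
      have hpre : ∀ x : FreeGroup (Fin d),
          (convPow μ n) (Prod.mk x ⁻¹' ((fun p : FreeGroup (Fin d) × FreeGroup (Fin d)
            => p.1 * p.2) ⁻¹' {g})) = ff d n ((x⁻¹ * g).norm) := by
        intro x
        have : (Prod.mk x ⁻¹' ((fun p : FreeGroup (Fin d) × FreeGroup (Fin d)
            => p.1 * p.2) ⁻¹' {g})) = {x⁻¹ * g} := by
          ext y
          simp only [Set.mem_preimage, Set.mem_singleton_iff]
          constructor
          · intro h; rw [← h]; rw [inv_mul_cancel_left]
          · intro h; rw [h, mul_inv_cancel_left]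
        rw [this, ihA]
      rw [lintegral_congr hpre, hμ, lintegral_smul_measure,
        lintegral_finset_sum_measure]
      have : ∀ i ∈ (Finset.univ : Finset (Fin d)),
          ∫⁻ x, ff d n ((x⁻¹ * g).norm)
            ∂(Measure.dirac (FreeGroup.of i) + Measure.dirac (FreeGroup.of i)⁻¹)
          = ff d n (((FreeGroup.of i)⁻¹ * g).norm) + ff d n ((FreeGroup.of i * g).norm) := by
        intro i _
        rw [lintegral_add_measure, lintegral_dirac, lintegral_dirac, inv_inv]
      rw [Finset.sum_congr rfl this]
      rw [ff_succ_norm hd1 n g, hcast, smul_eq_mul]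

lemma shannon_eq (hd : 2 ≤ d) (μ : Measure (FreeGroup (Fin d)))
    (hμ : μ = (2 * (d : ENNReal))⁻¹ •
      ∑ i : Fin d, (Measure.dirac (FreeGroup.of i) + Measure.dirac (FreeGroup.of i)⁻¹))
    (n : ℕ) :
    shannonEntropy (convPow μ n)
      = ∑ k ∈ Finset.range (n + 1), (Nn d k) • Real.negMulLog ((ff d n k).toReal) := by
  unfold shannonEntropy
  have hA := (convPow_key hd μ hμ n).2
  have h1 : ∀ g : FreeGroup (Fin d),
      -(((convPow μ n) {g}).toReal * Real.log ((convPow μ n) {g}).toReal)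
        = Real.negMulLog ((ff d n g.norm).toReal) := by
    intro g
    rw [hA g, Real.negMulLog, neg_mul]
  rw [tsum_congr h1]
  exact tsum_norm_eq_sum (fun k => Real.negMulLog ((ff d n k).toReal)) n
    (fun k hk => by show ((ff d n k).toReal).negMulLog = 0; rw [ff_zero_of_lt n k hk]; simp)

end Meas


section RealSide

variable {d : ℕ}

lemma ff_ne_top (hd1 : 1 ≤ d) (n k : ℕ) : ff d n k ≠ ⊤ :=
  ((ff_le_one hd1 n k).trans_lt ENNReal.one_lt_top).ne

lemma mass_fin (hd1 : 1 ≤ d) (n : ℕ) :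
    ∑ k ∈ Finset.range (n + 1), (Nn d k) • ff d n k = 1 := by
  rw [← tsum_norm_eq_sum (ff d n) n (fun k hk => ff_zero_of_lt n k hk), mass hd1 n]

lemma Esum_fin (n : ℕ) : Esum d n
    = ∑ k ∈ Finset.range (n + 1), (Nn d k) • (ff d n k * (k : ℝ≥0∞)) := by
  rw [← tsum_norm_eq_sum (fun k => ff d n k * (k : ℝ≥0∞)) n
    (fun k hk => by show ff d n k * (k : ℝ≥0∞) = 0; rw [ff_zero_of_lt n k hk, zero_mul])]
  rfl

lemma mass_real (hd1 : 1 ≤ d) (n : ℕ) :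
    ∑ k ∈ Finset.range (n + 1), (Nn d k : ℝ) * (ff d n k).toReal = 1 := by
  have := congrArg ENNReal.toReal (mass_fin hd1 n)
  rw [ENNReal.toReal_one] at this
  rw [← this, ENNReal.toReal_sum (fun k _ => ?_)]
  · refine Finset.sum_congr rfl fun k _ => ?_
    rw [nsmul_eq_mul, ENNReal.toReal_mul, ENNReal.toReal_natCast]
  · rw [nsmul_eq_mul]
    exact ENNReal.mul_ne_top (ENNReal.natCast_ne_top _) (ff_ne_top hd1 n k)

lemma ee_eq (hd1 : 1 ≤ d) (n : ℕ) : (Esum d n).toReal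
    = ∑ k ∈ Finset.range (n + 1), (k : ℝ) * ((Nn d k : ℝ) * (ff d n k).toReal) := by
  rw [Esum_fin, ENNReal.toReal_sum (fun k _ => ?_)]
  · refine Finset.sum_congr rfl fun k _ => ?_
    rw [nsmul_eq_mul, ENNReal.toReal_mul, ENNReal.toReal_mul, ENNReal.toReal_natCast,
      ENNReal.toReal_natCast]
    ring
  · rw [nsmul_eq_mul]
    exact ENNReal.mul_ne_top (ENNReal.natCast_ne_top _)
      (ENNReal.mul_ne_top (ff_ne_top hd1 n _) (ENNReal.natCast_ne_top _))

lemma Esum_ne_top (hd1 : 1 ≤ d) (n : ℕ) : Esum d n ≠ ⊤ :=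
  ((Esum_le hd1 n).trans_lt (ENNReal.natCast_lt_top n)).ne

lemma ee_succ (hd : 2 ≤ d) (n : ℕ) :
    (Esum d (n + 1)).toReal = (Esum d n).toReal
      + ((2 * d - 2 : ℕ) : ℝ) / ((2 * d : ℕ) : ℝ)
      + 2 * (ff d n 0).toReal / ((2 * d : ℕ) : ℝ) := by
  have hd1 : 1 ≤ d := by omega
  have h1 : ((2 * d : ℕ) : ℝ≥0∞)⁻¹ * ((2 * d - 2 : ℕ) : ℝ≥0∞) ≠ ⊤ :=
    ENNReal.mul_ne_top (ENNReal.inv_ne_top.mpr (by simp only [ne_eq, Nat.cast_eq_zero]; omega))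
      (ENNReal.natCast_ne_top _)
  have h2 : ((2 * d : ℕ) : ℝ≥0∞)⁻¹ * (2 * ff d n 0) ≠ ⊤ :=
    ENNReal.mul_ne_top (ENNReal.inv_ne_top.mpr (by simp only [ne_eq, Nat.cast_eq_zero]; omega))
      (ENNReal.mul_ne_top (by simp) (ff_ne_top hd1 n 0))
  rw [Esum_succ hd1 n, ENNReal.toReal_add (ENNReal.add_ne_top.mpr
    ⟨Esum_ne_top hd1 n, h1⟩) h2, ENNReal.toReal_add (Esum_ne_top hd1 n) h1]
  rw [ENNReal.toReal_mul, ENNReal.toReal_mul, ENNReal.toReal_inv,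
    ENNReal.toReal_natCast, ENNReal.toReal_natCast, ENNReal.toReal_mul]
  norm_num
  ring

lemma rr0_le (hd : 2 ≤ d) (n : ℕ) :
    (ff d n 0).toReal ≤ ((rho d).toReal) ^ n := by
  rw [← ENNReal.toReal_pow]
  exact ENNReal.toReal_mono (by
    exact ENNReal.pow_ne_top (rho_lt_one hd).ne_top) (ff_zero_le_rho_pow hd n)

lemma rhoR_nonneg : 0 ≤ (rho d).toReal := ENNReal.toReal_nonneg

lemma rhoR_lt_one (hd : 2 ≤ d) : (rho d).toReal < 1 := by
  have := rho_lt_one hd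
  have h := (ENNReal.toReal_lt_toReal this.ne_top ENNReal.one_ne_top).mpr this
  rwa [ENNReal.toReal_one] at h

lemma ee_bounds (hd : 2 ≤ d) (n : ℕ) :
    n * (((2 * d - 2 : ℕ) : ℝ) / ((2 * d : ℕ) : ℝ)) ≤ (Esum d n).toReal ∧
    (Esum d n).toReal ≤ n * (((2 * d - 2 : ℕ) : ℝ) / ((2 * d : ℕ) : ℝ))
      + (1 - (rho d).toReal)⁻¹ := by
  have hd1 : 1 ≤ d := by omega
  set cR : ℝ := ((2 * d - 2 : ℕ) : ℝ) / ((2 * d : ℕ) : ℝ) with hcR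
  set ρ : ℝ := (rho d).toReal with hρ
  have hρ0 : 0 ≤ ρ := rhoR_nonneg
  have hρ1 : ρ < 1 := rhoR_lt_one hd
  have hgeom : ∀ m : ℕ, ∑ j ∈ Finset.range m, ρ ^ j ≤ (1 - ρ)⁻¹ := by
    intro m
    rw [← tsum_geometric_of_lt_one hρ0 hρ1]
    exact (summable_geometric_of_lt_one hρ0 hρ1).sum_le_tsum (Finset.range m)
      (fun j _ => pow_nonneg hρ0 j)
  have key : ∀ m : ℕ, m * cR ≤ (Esum d m).toReal ∧
      (Esum d m).toReal ≤ m * cR + ∑ j ∈ Finset.range m, ρ ^ j := by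
    intro m
    induction m with
    | zero =>
      simp [Esum_zero]
    | succ m ih =>
      obtain ⟨ihl, ihr⟩ := ih
      have hrec := ee_succ hd m
      have hthird_nonneg : 0 ≤ 2 * (ff d m 0).toReal / ((2 * d : ℕ) : ℝ) := by
        positivity
      have hthird_le : 2 * (ff d m 0).toReal / ((2 * d : ℕ) : ℝ) ≤ ρ ^ m := by
        have h2d : (2 : ℝ) ≤ ((2 * d : ℕ) : ℝ) := by
          have : (2 : ℕ) ≤ 2 * d := by omega
          exact_mod_cast this
        have hff : (ff d m 0).toReal ≤ ρ ^ m := rr0_le hd m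
        have hpos : (0:ℝ) < ((2 * d : ℕ) : ℝ) := by linarith
        rw [div_le_iff₀ hpos]
        calc 2 * (ff d m 0).toReal ≤ 2 * ρ ^ m := by
              nlinarith [ENNReal.toReal_nonneg (a := ff d m 0)]
          _ ≤ ρ ^ m * ((2 * d : ℕ) : ℝ) := by
              nlinarith [pow_nonneg hρ0 m]
      rw [hcR] at ihl ihr ⊢
      constructor
      · rw [hrec, show ((m + 1 : ℕ) : ℝ) = (m : ℝ) + 1 from by push_cast; ring]
        nlinarith
      · rw [hrec]
        calc (Esum d m).toReal + ((2 * d - 2 : ℕ) : ℝ) / ((2 * d : ℕ) : ℝ)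
              + 2 * (ff d m 0).toReal / ((2 * d : ℕ) : ℝ)
            ≤ (m * (((2 * d - 2 : ℕ) : ℝ) / ((2 * d : ℕ) : ℝ))
                + ∑ j ∈ Finset.range m, ρ ^ j)
                + ((2 * d - 2 : ℕ) : ℝ) / ((2 * d : ℕ) : ℝ) + ρ ^ m := by
              gcongr
          _ = ((m : ℕ) + 1 : ℕ) * (((2 * d - 2 : ℕ) : ℝ) / ((2 * d : ℕ) : ℝ))
                + ∑ j ∈ Finset.range (m + 1), ρ ^ j := by
              rw [Finset.sum_range_succ]
              push_cast
              ring
    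
  refine ⟨(key n).1, (key n).2.trans ?_⟩
  have := hgeom n
  linarith

end RealSide


section Entropy

lemma Nn_pos {d : ℕ} (hd1 : 1 ≤ d) (k : ℕ) : 0 < Nn d k := by
  rcases k with _ | m
  · simp [Nn]
  · have h3 : 0 < (2 * d - 1) ^ m := pow_pos (by omega) m
    have : 0 < 2 * d * (2 * d - 1) ^ m := Nat.mul_pos (by omega) h3
    simpa [Nn] using this

/-- entropy of a finitely supported probability vector is at most `log` of support size -/
lemma sum_negMulLog_le {ι : Type*} {s : Finset ι} {q : ι → ℝ}
    (h0 : ∀ i ∈ s, 0 ≤ q i) (h1 : ∑ i ∈ s, q i = 1) :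
    ∑ i ∈ s, Real.negMulLog (q i) ≤ Real.log s.card := by
  classical
  set t := s.filter (fun i => 0 < q i) with ht
  have hts : t ⊆ s := Finset.filter_subset _ _
  have ht_sum : ∑ i ∈ t, q i = 1 := by
    rw [← h1, ht]
    apply Finset.sum_filter_of_ne
    intro i hi hq
    exact lt_of_le_of_ne (h0 i hi) (Ne.symm hq)
  have ht_ent : ∑ i ∈ s, Real.negMulLog (q i) = ∑ i ∈ t, Real.negMulLog (q i) := by
    rw [ht]
    symm
    apply Finset.sum_filter_of_ne
    intro i hi hq
    rcases lt_or_eq_of_le (h0 i hi) with h | h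
    · exact h
    · exact absurd (by rw [← h]; exact Real.negMulLog_zero) hq
  have htne : t.Nonempty := by
    by_contra hemp
    rw [Finset.not_nonempty_iff_eq_empty] at hemp
    rw [hemp, Finset.sum_empty] at ht_sum
    norm_num at ht_sum
  have hjensen : ∑ i ∈ t, q i • Real.log ((q i)⁻¹)
      ≤ Real.log (∑ i ∈ t, q i • (q i)⁻¹) := by
    apply ConcaveOn.le_map_sum strictConcaveOn_log_Ioi.concaveOn
    · intro i hi
      exact (h0 i (hts hi))
    · exact ht_sum
    · intro i hi
      have : 0 < q i := (Finset.mem_filter.mp hi).2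
      exact Set.mem_Ioi.mpr (inv_pos.mpr this)
  have hsum_inv : ∑ i ∈ t, q i • (q i)⁻¹ = (t.card : ℝ) := by
    rw [Finset.sum_congr rfl (fun i hi => ?_), Finset.sum_const, nsmul_eq_mul, mul_one]
    have : 0 < q i := (Finset.mem_filter.mp hi).2
    rw [smul_eq_mul, mul_inv_cancel₀ (ne_of_gt this)]
  have hlhs : ∑ i ∈ t, q i • Real.log ((q i)⁻¹) = ∑ i ∈ t, Real.negMulLog (q i) := by
    refine Finset.sum_congr rfl fun i hi => ?_
    rw [smul_eq_mul, Real.log_inv, Real.negMulLog]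
    ring
  rw [ht_ent, ← hlhs]
  refine hjensen.trans ?_
  rw [hsum_inv]
  apply Real.log_le_log
  · exact_mod_cast Finset.card_pos.mpr htne
  · exact_mod_cast Finset.card_le_card hts

lemma logNn_bounds {d : ℕ} (hd : 2 ≤ d) (k : ℕ) :
    (k : ℝ) * Real.log ((2 * d - 1 : ℕ) : ℝ) - Real.log ((2 * d - 1 : ℕ) : ℝ)
      ≤ Real.log ((Nn d k : ℕ) : ℝ) ∧
    Real.log ((Nn d k : ℕ) : ℝ)
      ≤ (k : ℝ) * Real.log ((2 * d - 1 : ℕ) : ℝ) + Real.log ((2 * d : ℕ) : ℝ) := by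
  have hL0 : 0 ≤ Real.log ((2 * d - 1 : ℕ) : ℝ) := by
    apply Real.log_nonneg
    have : (1 : ℕ) ≤ 2 * d - 1 := by omega
    exact_mod_cast this
  have hL2 : 0 ≤ Real.log ((2 * d : ℕ) : ℝ) := by
    apply Real.log_nonneg
    have : (1 : ℕ) ≤ 2 * d := by omega
    exact_mod_cast this
  rcases k with _ | m
  · rw [show Nn d 0 = 1 from rfl]
    simp only [Nat.cast_one, Real.log_one, Nat.cast_zero, zero_mul]
    constructor <;> linarith
  · have hNn : ((Nn d (m+1) : ℕ) : ℝ)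
        = ((2 * d : ℕ) : ℝ) * ((2 * d - 1 : ℕ) : ℝ) ^ m := by
      simp only [Nn, Nat.succ_ne_zero, if_false, Nat.add_sub_cancel]
      push_cast
      ring
    have h2d0 : ((2 * d : ℕ) : ℝ) ≠ 0 := by
      have : (1:ℕ) ≤ 2 * d := by omega
      positivity
    have h2d1 : ((2 * d - 1 : ℕ) : ℝ) ≠ 0 := by
      have h : (1 : ℕ) ≤ 2 * d - 1 := by omega
      have : (1:ℝ) ≤ ((2 * d - 1 : ℕ) : ℝ) := by exact_mod_cast h
      linarith
    have hlog : Real.log ((Nn d (m+1) : ℕ) : ℝ)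
        = Real.log ((2 * d : ℕ) : ℝ) + m * Real.log ((2 * d - 1 : ℕ) : ℝ) := by
      rw [hNn, Real.log_mul h2d0 (pow_ne_zero m h2d1), Real.log_pow]
    rw [hlog]
    have hcast : ((m + 1 : ℕ) : ℝ) = (m : ℝ) + 1 := by push_cast; ring
    rw [hcast]
    constructor <;> nlinarith

lemma H_bounds {d : ℕ} (hd : 2 ≤ d) (n : ℕ) :
    (Esum d n).toReal * Real.log ((2 * d - 1 : ℕ) : ℝ) - Real.log ((2 * d - 1 : ℕ) : ℝ)
      ≤ ∑ k ∈ Finset.range (n + 1), (Nn d k : ℝ) * Real.negMulLog ((ff d n k).toReal) ∧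
    ∑ k ∈ Finset.range (n + 1), (Nn d k : ℝ) * Real.negMulLog ((ff d n k).toReal)
      ≤ (Esum d n).toReal * Real.log ((2 * d - 1 : ℕ) : ℝ) + Real.log ((2 * d : ℕ) : ℝ)
        + Real.log ((n : ℝ) + 1) := by
  have hd1 : 1 ≤ d := by omega
  set L : ℝ := Real.log ((2 * d - 1 : ℕ) : ℝ) with hLdef
  set p : ℕ → ℝ := fun k => (Nn d k : ℝ) * (ff d n k).toReal with hp
  have hp0 : ∀ k, 0 ≤ p k := fun k => mul_nonneg (Nat.cast_nonneg _) ENNReal.toReal_nonneg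
  have hp1 : ∑ k ∈ Finset.range (n + 1), p k = 1 := mass_real hd1 n
  have hNpos : ∀ k, (0:ℝ) < (Nn d k : ℝ) := fun k => by
    exact_mod_cast Nn_pos hd1 k
  have hident : ∀ k, (Nn d k : ℝ) * Real.negMulLog ((ff d n k).toReal)
      = Real.negMulLog (p k) + p k * Real.log ((Nn d k : ℝ)) := by
    intro k
    rcases eq_or_lt_of_le (ENNReal.toReal_nonneg (a := ff d n k)) with h | h
    · have h0 : (ff d n k).toReal = 0 := h.symm
      rw [hp]
      simp [h0]
    · rw [hp]
      simp only [Real.negMulLog]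
      rw [Real.log_mul (ne_of_gt (hNpos k)) (ne_of_gt h)]
      ring
  rw [Finset.sum_congr rfl (fun k _ => hident k), Finset.sum_add_distrib]
  set T : ℝ := ∑ k ∈ Finset.range (n + 1), Real.negMulLog (p k) with hT
  set S : ℝ := ∑ k ∈ Finset.range (n + 1), p k * Real.log ((Nn d k : ℝ)) with hS
  have hp_le_one : ∀ k ∈ Finset.range (n + 1), p k ≤ 1 := by
    intro k hk
    rw [← hp1]
    exact Finset.single_le_sum (fun j _ => hp0 j) hk
  have hT0 : 0 ≤ T := Finset.sum_nonneg fun k hk =>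
    Real.negMulLog_nonneg (hp0 k) (hp_le_one k hk)
  have hTlog : T ≤ Real.log ((n : ℝ) + 1) := by
    have := sum_negMulLog_le (s := Finset.range (n + 1)) (q := p)
      (fun k _ => hp0 k) hp1
    rwa [Finset.card_range, show (((n+1 : ℕ)) : ℝ) = (n : ℝ) + 1 from by push_cast; ring]
      at this
  have heq : ∑ k ∈ Finset.range (n + 1), (k : ℝ) * p k = (Esum d n).toReal :=
    (ee_eq hd1 n).symm
  have hL0 : 0 ≤ L := by
    rw [hLdef]
    apply Real.log_nonneg
    have : (1 : ℕ) ≤ 2 * d - 1 := by omega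
    exact_mod_cast this
  have hSlow : (Esum d n).toReal * L - L ≤ S := by
    have hterm : ∀ k ∈ Finset.range (n + 1),
        p k * ((k : ℝ) * L) - p k * L ≤ p k * Real.log ((Nn d k : ℝ)) := by
      intro k _
      have := (logNn_bounds hd k).1
      have h := mul_le_mul_of_nonneg_left this (hp0 k)
      calc p k * ((k : ℝ) * L) - p k * L = p k * ((k : ℝ) * L - L) := by ring
        _ ≤ _ := h
    have := Finset.sum_le_sum hterm
    rw [Finset.sum_sub_distrib] at this
    have e1 : ∑ k ∈ Finset.range (n + 1), p k * ((k : ℝ) * L)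
        = (Esum d n).toReal * L := by
      rw [← heq, Finset.sum_mul]
      exact Finset.sum_congr rfl fun k _ => by ring
    have e2 : ∑ k ∈ Finset.range (n + 1), p k * L = L := by
      rw [← Finset.sum_mul, hp1, one_mul]
    rw [e1, e2] at this
    exact this
  have hShigh : S ≤ (Esum d n).toReal * L + Real.log ((2 * d : ℕ) : ℝ) := by
    have hterm : ∀ k ∈ Finset.range (n + 1),
        p k * Real.log ((Nn d k : ℝ))
          ≤ p k * ((k : ℝ) * L) + p k * Real.log ((2 * d : ℕ) : ℝ) := by
      intro k _
      have := (logNn_bounds hd k).2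
      have h := mul_le_mul_of_nonneg_left this (hp0 k)
      calc p k * Real.log ((Nn d k : ℝ)) ≤ p k * ((k : ℝ) * L + Real.log ((2 * d : ℕ) : ℝ))
            := h
        _ = p k * ((k : ℝ) * L) + p k * Real.log ((2 * d : ℕ) : ℝ) := by ring
    have := Finset.sum_le_sum hterm
    rw [Finset.sum_add_distrib] at this
    have e1 : ∑ k ∈ Finset.range (n + 1), p k * ((k : ℝ) * L)
        = (Esum d n).toReal * L := by
      rw [← heq, Finset.sum_mul]
      exact Finset.sum_congr rfl fun k _ => by ring
    have e2 : ∑ k ∈ Finset.range (n + 1), p k * Real.log ((2 * d : ℕ) : ℝ)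
        = Real.log ((2 * d : ℕ) : ℝ) := by
      rw [← Finset.sum_mul, hp1, one_mul]
    rw [e1, e2] at this
    exact this
  constructor
  · linarith
  · linarith

end Entropy

end AvezAux

open AvezAux in
/-- For `d ≥ 2`, the Avez entropy of the simple random walk on the free group `F_d`,
driven by the uniform measure `μ` on the symmetric free generating set
`{a_1^{±1}, …, a_d^{±1}}` (each of the `2d` elements has mass `1/(2d)`), satisfies
`lim_n H(μ^{*n})/n = ((d−1)/d)·log(2d−1)`. -/
theorem avez_entropy_free_group (d : ℕ) (hd : 2 ≤ d)
    [MeasurableSpace (FreeGroup (Fin d))] [MeasurableSingletonClass (FreeGroup (Fin d))]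
    (μ : Measure (FreeGroup (Fin d)))
    (hμ : μ = (2 * (d : ENNReal))⁻¹ •
      ∑ i : Fin d, (Measure.dirac (FreeGroup.of i) + Measure.dirac (FreeGroup.of i)⁻¹)) :
    Tendsto (fun n : ℕ => shannonEntropy (convPow μ n) / n) atTop
      (𝓝 (((d : ℝ) - 1) / d * Real.log (2 * d - 1))) := by
  have hd1 : 1 ≤ d := by omega
  set L : ℝ := Real.log ((2 * d - 1 : ℕ) : ℝ) with hLdef
  set cR : ℝ := ((2 * d - 2 : ℕ) : ℝ) / ((2 * d : ℕ) : ℝ) with hcRdef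
  set A : ℝ := cR * L with hAdef
  have hdR : (0:ℝ) < (d : ℝ) := by exact_mod_cast (by omega : 0 < d)
  have hcast1 : ((2 * d - 1 : ℕ) : ℝ) = 2 * (d:ℝ) - 1 := by
    rw [Nat.cast_sub (by omega : 1 ≤ 2 * d)]
    push_cast
    ring
  have hcast2 : ((2 * d - 2 : ℕ) : ℝ) = 2 * (d:ℝ) - 2 := by
    rw [Nat.cast_sub (by omega : 2 ≤ 2 * d)]
    push_cast
    ring
  have htarget : ((d : ℝ) - 1) / d * Real.log (2 * (d:ℝ) - 1) = A := by
    rw [hAdef, hLdef, hcast1, hcRdef, hcast2]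
    have h2d : ((2 * d : ℕ) : ℝ) = 2 * (d:ℝ) := by push_cast; ring
    rw [h2d]
    congr 1
    field_simp
  rw [htarget]
  have hL0 : 0 ≤ L := by
    rw [hLdef]
    apply Real.log_nonneg
    have : (1 : ℕ) ≤ 2 * d - 1 := by omega
    exact_mod_cast this
  set ρ : ℝ := (rho d).toReal with hρ
  set CB : ℝ := (1 - ρ)⁻¹ with hCB
  set C2 : ℝ := CB * L + Real.log ((2 * d : ℕ) : ℝ) with hC2
  -- entropy expression
  have hH : ∀ n : ℕ, shannonEntropy (convPow μ n)
      = ∑ k ∈ Finset.range (n + 1), (Nn d k : ℝ) * Real.negMulLog ((ff d n k).toReal) := by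
    intro n
    rw [shannon_eq hd μ hμ n]
    exact Finset.sum_congr rfl fun k _ => nsmul_eq_mul _ _
  -- two-sided bounds on the entropy
  have hlow : ∀ n : ℕ, (n : ℝ) * A - L ≤ shannonEntropy (convPow μ n) := by
    intro n
    rw [hH n]
    have h1 := (H_bounds hd n).1
    have h2 := (ee_bounds hd n).1
    have h3 : (n : ℝ) * cR * L ≤ (Esum d n).toReal * L :=
      mul_le_mul_of_nonneg_right h2 hL0
    rw [hAdef]
    nlinarith
  have hup : ∀ n : ℕ, shannonEntropy (convPow μ n)
      ≤ (n : ℝ) * A + C2 + Real.log ((n : ℝ) + 1) := by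
    intro n
    rw [hH n]
    have h1 := (H_bounds hd n).2
    have h2 := (ee_bounds hd n).2
    have h3 : (Esum d n).toReal * L ≤ ((n : ℝ) * cR + CB) * L :=
      mul_le_mul_of_nonneg_right h2 hL0
    rw [hAdef, hC2]
    nlinarith
  -- limits of the bounding sequences
  have h1n : Tendsto (fun n : ℕ => (1:ℝ)/n) atTop (𝓝 0) :=
    tendsto_one_div_atTop_nhds_zero_nat
  have hlo_t : Tendsto (fun n : ℕ => A - L * (1/(n:ℝ))) atTop (𝓝 A) := by
    have := tendsto_const_nhds (x := A) (f := atTop (α := ℕ)) |>.sub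
      ((tendsto_const_nhds (x := L)).mul h1n)
    simpa using this
  have hlogn : Tendsto (fun n : ℕ => Real.log ((n:ℝ)+1)/(n:ℝ)) atTop (𝓝 0) := by
    have ha : Tendsto (fun x : ℝ => Real.log x / x) atTop (𝓝 0) :=
      Real.isLittleO_log_id_atTop.tendsto_div_nhds_zero
    have hb : Tendsto (fun n : ℕ => (n:ℝ)+1) atTop atTop :=
      tendsto_atTop_add_const_right _ 1 tendsto_natCast_atTop_atTop
    have hc := ha.comp hb
    have hd' : Tendsto (fun n : ℕ => ((n:ℝ)+1)/(n:ℝ)) atTop (𝓝 1) := by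
      have h := (tendsto_const_nhds (x := (1:ℝ)) (f := atTop (α := ℕ))).add h1n
      rw [add_zero] at h
      apply Tendsto.congr' ?_ h
      filter_upwards [eventually_ge_atTop 1] with n hn
      have hn0 : (n:ℝ) ≠ 0 := by
        have : (0:ℝ) < n := by exact_mod_cast hn
        linarith
      field_simp
    have := hc.mul hd'
    rw [zero_mul] at this
    apply Tendsto.congr' ?_ this
    filter_upwards [eventually_ge_atTop 1] with n hn
    have hn0 : (n:ℝ) ≠ 0 := by
      have : (0:ℝ) < n := by exact_mod_cast hn
      linarith
    show Real.log ((n:ℝ)+1) / ((n:ℝ)+1) * (((n:ℝ)+1)/(n:ℝ)) = Real.log ((n:ℝ)+1)/(n:ℝ)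
    have hn1 : ((n:ℝ)+1) ≠ 0 := by positivity
    field_simp
  have hhi_t : Tendsto (fun n : ℕ => A + C2 * (1/(n:ℝ)) + Real.log ((n:ℝ)+1)/(n:ℝ))
      atTop (𝓝 A) := by
    have := ((tendsto_const_nhds (x := A) (f := atTop (α := ℕ))).add
      ((tendsto_const_nhds (x := C2)).mul h1n)).add hlogn
    simpa using this
  -- squeeze
  apply tendsto_of_tendsto_of_tendsto_of_le_of_le' hlo_t hhi_t
  · filter_upwards [eventually_ge_atTop 1] with n hn
    have hn0 : (0:ℝ) < (n:ℝ) := by exact_mod_cast hn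
    rw [le_div_iff₀ hn0]
    have : (A - L * (1/(n:ℝ))) * (n:ℝ) = (n:ℝ) * A - L := by
      field_simp
    rw [this]
    exact hlow n
  · filter_upwards [eventually_ge_atTop 1] with n hn
    have hn0 : (0:ℝ) < (n:ℝ) := by exact_mod_cast hn
    rw [div_le_iff₀ hn0]
    have : (A + C2 * (1/(n:ℝ)) + Real.log ((n:ℝ)+1)/(n:ℝ)) * (n:ℝ)
        = (n:ℝ) * A + C2 + Real.log ((n:ℝ)+1) := by
      field_simp
    rw [this]
    exact hup n
end
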